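/- arXiv:1105.3375 — 5 statements merged into one kernel-verified Lean document; each statement's English description precedes it below -/
import Mathlib

section
/- For every natural number μ one has Γ(μ/2 + 1) ≤ 2^{−μ/2} · √(μ+1) · √(μ!), where Γ is the Gamma function. -/
open Real

/-- From log-convexity of `Γ`: `Γ(x + 1/2) ≤ √x · Γ(x)` for `x > 0`. -/
lemma gamma_add_half_le (x : ℝ) (hx : 0 < x) :
    Real.Gamma (x + 1/2) ≤ Real.sqrt x * Real.Gamma x := by
  have hx1 : (0:ℝ) < x + 1 := by linarith
  have hG : 0 < Real.Gamma x := Real.Gamma_pos_of_pos hx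
  have hG1 : 0 < Real.Gamma (x + 1) := Real.Gamma_pos_of_pos hx1
  have hGh : 0 < Real.Gamma (x + 1/2) := Real.Gamma_pos_of_pos (by linarith)
  have hconv := Real.convexOn_log_Gamma.2 (Set.mem_Ioi.mpr hx) (Set.mem_Ioi.mpr hx1)
    (by norm_num : (0:ℝ) ≤ 1/2) (by norm_num : (0:ℝ) ≤ 1/2) (by norm_num)
  simp only [Function.comp_apply, smul_eq_mul] at hconv
  have hmid : (1/2 : ℝ) * x + (1/2 : ℝ) * (x + 1) = x + 1/2 := by ring
  rw [hmid] at hconv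
  have hfeq : Real.Gamma (x + 1) = x * Real.Gamma x := Real.Gamma_add_one hx.ne'
  have hlog : Real.log (Real.Gamma (x + 1/2)) ≤ Real.log (Real.sqrt x * Real.Gamma x) := by
    rw [Real.log_mul (Real.sqrt_pos.mpr hx).ne' hG.ne', Real.log_sqrt hx.le]
    calc Real.log (Real.Gamma (x + 1/2))
        ≤ 1/2 * Real.log (Real.Gamma x) + 1/2 * Real.log (Real.Gamma (x+1)) := hconv
      _ = Real.log x / 2 + Real.log (Real.Gamma x) := by
          rw [hfeq, Real.log_mul hx.ne' hG.ne']; ring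
  have := Real.exp_le_exp.mpr hlog
  rwa [Real.exp_log hGh, Real.exp_log (mul_pos (Real.sqrt_pos.mpr hx) hG)] at this

/-- For every `μ ∈ ℕ`: `Γ(μ/2 + 1) ≤ 2^{−μ/2} · √(μ+1) · √(μ!)`. -/
theorem stmt_8 (μ : ℕ) :
    Real.Gamma ((μ : ℝ) / 2 + 1) ≤
      (2 : ℝ) ^ (-(μ : ℝ) / 2) * Real.sqrt ((μ : ℝ) + 1) *
        Real.sqrt (Nat.factorial μ) := by
  rcases Nat.eq_zero_or_pos μ with rfl | hμ
  · simp [Real.Gamma_one]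
  -- set x = (μ+1)/2
  set x : ℝ := ((μ:ℝ) + 1) / 2 with hxdef
  have hμ1 : (1:ℝ) ≤ (μ:ℝ) := by exact_mod_cast hμ
  have hx : 0 < x := by rw [hxdef]; positivity
  have hrw : (μ:ℝ)/2 + 1 = x + 1/2 := by rw [hxdef]; ring
  rw [hrw]
  have hGh : 0 < Real.Gamma (x + 1/2) := Real.Gamma_pos_of_pos (by linarith)
  -- duplication formula
  have hdup : Real.Gamma x * Real.Gamma (x + 1/2)
      = (Nat.factorial μ : ℝ) * (2:ℝ) ^ (-(μ:ℝ)) * Real.sqrt π := by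
    have := Real.Gamma_mul_Gamma_add_half_of_pos hx
    have h2x : 2 * x = (μ:ℝ) + 1 := by rw [hxdef]; ring
    rw [h2x] at this
    have : Real.Gamma x * Real.Gamma (x + 1/2)
        = Real.Gamma ((μ:ℝ) + 1) * (2:ℝ) ^ (1 - ((μ:ℝ)+1)) * Real.sqrt π := this
    rw [this]
    rw [Real.Gamma_nat_eq_factorial]
    norm_num
  -- square of LHS bound
  have hkey : Real.Gamma (x + 1/2) ^ 2
      ≤ Real.sqrt x * ((Nat.factorial μ : ℝ) * (2:ℝ) ^ (-(μ:ℝ)) * Real.sqrt π) := by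
    have h1 := gamma_add_half_le x hx
    calc Real.Gamma (x + 1/2) ^ 2
        = Real.Gamma (x + 1/2) * Real.Gamma (x + 1/2) := sq (Real.Gamma (x+1/2)) ▸ by ring
      _ ≤ (Real.sqrt x * Real.Gamma x) * Real.Gamma (x + 1/2) := by
          exact mul_le_mul_of_nonneg_right h1 hGh.le
      _ = Real.sqrt x * (Real.Gamma x * Real.Gamma (x + 1/2)) := by ring
      _ = _ := by rw [hdup]
  -- bound √x · √π ≤ μ + 1
  have hxpi : Real.sqrt x * Real.sqrt π ≤ (μ:ℝ) + 1 := by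
    rw [← Real.sqrt_mul hx.le]
    have h1 : x * π ≤ ((μ:ℝ) + 1)^2 := by
      have hpi : π ≤ 4 := Real.pi_le_four
      have : x * π ≤ x * 4 := by
        apply mul_le_mul_of_nonneg_left hpi hx.le
      nlinarith
    calc Real.sqrt (x * π) ≤ Real.sqrt (((μ:ℝ)+1)^2) := Real.sqrt_le_sqrt h1
      _ = (μ:ℝ) + 1 := Real.sqrt_sq (by positivity)
  -- RHS squared
  have hRHSsq : ((2 : ℝ) ^ (-(μ : ℝ) / 2) * Real.sqrt ((μ : ℝ) + 1) *
        Real.sqrt (Nat.factorial μ)) ^ 2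
      = (2:ℝ) ^ (-(μ:ℝ)) * ((μ:ℝ) + 1) * (Nat.factorial μ : ℝ) := by
    rw [mul_pow, mul_pow, Real.sq_sqrt (by positivity), Real.sq_sqrt (by positivity),
      ← Real.rpow_natCast ((2:ℝ) ^ (-(μ:ℝ)/2)) 2, ← Real.rpow_mul (by norm_num)]
    norm_num
  have hsq : Real.Gamma (x + 1/2) ^ 2
      ≤ ((2 : ℝ) ^ (-(μ : ℝ) / 2) * Real.sqrt ((μ : ℝ) + 1) *
        Real.sqrt (Nat.factorial μ)) ^ 2 := by
    rw [hRHSsq]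
    calc Real.Gamma (x + 1/2) ^ 2
        ≤ Real.sqrt x * ((Nat.factorial μ : ℝ) * (2:ℝ) ^ (-(μ:ℝ)) * Real.sqrt π) := hkey
      _ = (Real.sqrt x * Real.sqrt π) * ((2:ℝ) ^ (-(μ:ℝ)) * (Nat.factorial μ : ℝ)) := by ring
      _ ≤ ((μ:ℝ) + 1) * ((2:ℝ) ^ (-(μ:ℝ)) * (Nat.factorial μ : ℝ)) := by
          apply mul_le_mul_of_nonneg_right hxpi
          positivity
      _ = (2:ℝ) ^ (-(μ:ℝ)) * ((μ:ℝ) + 1) * (Nat.factorial μ : ℝ) := by ring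
  -- conclude from squares
  have hRHSpos : (0:ℝ) ≤ (2 : ℝ) ^ (-(μ : ℝ) / 2) * Real.sqrt ((μ : ℝ) + 1) *
        Real.sqrt (Nat.factorial μ) := by positivity
  nlinarith [hGh, hsq, hRHSpos]
end

section
/- Let n ≥ 1 and l ≥ 0 be integers and let λ ≥ 0 be an integer. Then Σ [ 1/((l₁+1)²(l₂+1)²·n₁²·n₂²) · n!/(n₁!·n₂!) · λ!/(λ₁!·λ₂!) · (n₁+l₁−1)!·(n₂+l₂−1)!/(n+l−1)! ] ≤ 20/((l+1)²·n²), where the sum runs over all integers l₁, l₂ ≥ 0 with l₁+l₂ = l, all integers n₁, n₂ ≥ 1 with n₁+n₂ = n+1, and all integers λ₁, λ₂ ≥ 0 with λ₁ ≤ l₁, λ₂ ≤ l₂ and λ₁+λ₂ = λ. -/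
set_option maxHeartbeats 1000000

open Finset

open Finset

lemma Hsum_le (m : ℕ) : ∑ k ∈ range m, (1:ℝ)/((k:ℝ)+1) ≤ (m:ℝ)/6 + 3/2 := by
  induction m with
  | zero => norm_num
  | succ m ih =>
    rw [Finset.sum_range_succ]
    by_cases h : 5 ≤ m
    · have h1 : (1:ℝ)/((m:ℝ)+1) ≤ 1/6 := by
        rw [div_le_div_iff₀ (by positivity) (by norm_num)]
        have : (5:ℝ) ≤ (m:ℝ) := by exact_mod_cast h
        linarith
      push_cast
      linarith
    · interval_cases m <;> norm_num [Finset.sum_range_succ]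

lemma S2_le (m : ℕ) : ∑ k ∈ range m, (1:ℝ)/((k:ℝ)+1)^2 ≤ 5/3 := by
  have key : ∀ m : ℕ, 1 ≤ m → ∑ k ∈ range m, (1:ℝ)/((k:ℝ)+1)^2 ≤ 5/3 - 2/(2*(m:ℝ)+1) := by
    intro m hm
    induction m with
    | zero => omega
    | succ m ih =>
      rcases Nat.eq_zero_or_pos m with rfl | hm'
      · norm_num [Finset.sum_range_succ]
      · rw [Finset.sum_range_succ]
        have h1 : (1:ℝ)/((m:ℝ)+1)^2 ≤ 2/(2*(m:ℝ)+1) - 2/(2*(m:ℝ)+3) := by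
          rw [div_sub_div _ _ (by positivity) (by positivity),
            div_le_div_iff₀ (by positivity) (by positivity)]
          nlinarith [Nat.cast_nonneg (α := ℝ) m]
        have := ih hm'
        push_cast
        rw [show 2*((m:ℝ)+1)+1 = 2*(m:ℝ)+3 from by ring]
        linarith
  rcases Nat.eq_zero_or_pos m with rfl | hm
  · norm_num
  · have := key m hm
    have h2 : (0:ℝ) < 2/(2*(m:ℝ)+1) := by positivity
    linarith

lemma S3_le (m : ℕ) : ∑ k ∈ range m, (1:ℝ)/((k:ℝ)+1)^3 ≤ 5/4 := by
  have key : ∀ m : ℕ, 1 ≤ m → ∑ k ∈ range m, (1:ℝ)/((k:ℝ)+1)^3 ≤ 5/4 - 2/(2*(m:ℝ)+1)^2 := by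
    intro m hm
    induction m with
    | zero => omega
    | succ m ih =>
      rcases Nat.eq_zero_or_pos m with rfl | hm'
      · norm_num [Finset.sum_range_succ]
      · rw [Finset.sum_range_succ]
        have h1 : (1:ℝ)/((m:ℝ)+1)^3 ≤ 2/(2*(m:ℝ)+1)^2 - 2/(2*(m:ℝ)+3)^2 := by
          rw [div_sub_div _ _ (by positivity) (by positivity),
            div_le_div_iff₀ (by positivity) (by positivity)]
          nlinarith [Nat.cast_nonneg (α := ℝ) m]
        have := ih hm'
        push_cast
        rw [show 2*((m:ℝ)+1)+1 = 2*(m:ℝ)+3 from by ring]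
        linarith
  rcases Nat.eq_zero_or_pos m with rfl | hm
  · norm_num
  · have := key m hm
    have h2 : (0:ℝ) < 2/(2*(m:ℝ)+1)^2 := by positivity
    linarith

lemma vand (p q i j : ℕ) : p.choose i * q.choose j ≤ (p+q).choose (i+j) := by
  rw [Nat.add_choose_eq]
  exact Finset.single_le_sum (f := fun ij : ℕ × ℕ => p.choose ij.1 * q.choose ij.2)
    (fun _ _ => Nat.zero_le _) (Finset.HasAntidiagonal.mem_antidiagonal.2 (rfl : (i, j).1 + (i, j).2 = i + j))

lemma Gsum_nat (l lam l₁ : ℕ) (h : l₁ ≤ l) :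
    ∑ lam₁ ∈ Finset.range (lam+1),
      (if lam₁ ≤ l₁ ∧ lam - lam₁ ≤ l - l₁ then lam.choose lam₁ * (l-lam).choose (l₁-lam₁) else 0)
    ≤ l.choose l₁ := by
  by_cases hll : lam ≤ l
  · rw [← Finset.sum_filter]
    have hsub : (Finset.range (lam+1)).filter
        (fun lam₁ => lam₁ ≤ l₁ ∧ lam - lam₁ ≤ l - l₁) ⊆ Finset.range (l₁+1) := by
      intro x hx
      simp only [Finset.mem_filter, Finset.mem_range] at hx ⊢
      omega
    calc ∑ lam₁ ∈ (Finset.range (lam+1)).filter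
          (fun lam₁ => lam₁ ≤ l₁ ∧ lam - lam₁ ≤ l - l₁),
          lam.choose lam₁ * (l-lam).choose (l₁-lam₁)
        ≤ ∑ lam₁ ∈ Finset.range (l₁+1), lam.choose lam₁ * (l-lam).choose (l₁-lam₁) :=
          Finset.sum_le_sum_of_subset hsub
      _ = (lam + (l-lam)).choose l₁ := by
          rw [Nat.add_choose_eq, Finset.Nat.sum_antidiagonal_eq_sum_range_succ_mk]
      _ = l.choose l₁ := by congr 1; omega
  · have hz : ∀ lam₁ ∈ Finset.range (lam+1),
        (if lam₁ ≤ l₁ ∧ lam - lam₁ ≤ l - l₁ then lam.choose lam₁ * (l-lam).choose (l₁-lam₁) else 0) = 0 := by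
      intro x hx
      rw [if_neg]
      omega
    rw [Finset.sum_congr rfl hz]
    simp

lemma key_nat (n l lam l₁ n₁ lam₁ : ℕ) (hn₁ : 1 ≤ n₁) (hn₁n : n₁ ≤ n) (hl₁ : l₁ ≤ l)
    (hlam₁ : lam₁ ≤ lam) (hc1 : lam₁ ≤ l₁) (hc2 : lam - lam₁ ≤ l - l₁) :
    n.factorial * lam.factorial * (n₁ + l₁ - 1).factorial * ((n+1-n₁) + (l-l₁) - 1).factorial
      * (l.choose l₁) * (n₁ * (n+1-n₁))
    ≤ n * (n₁.factorial * (n+1-n₁).factorial) * (lam₁.factorial * (lam-lam₁).factorial)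
      * (n+l-1).factorial * (lam.choose lam₁ * (l-lam).choose (l₁-lam₁)) := by
  set n₂ := n + 1 - n₁ with hn₂def
  have hn₂ : 1 ≤ n₂ := by omega
  have efn : n.factorial = n * (n-1).factorial := by
    have e : n - 1 + 1 = n := by omega
    rw [← e, Nat.factorial_succ, e]
  have efn1 : n₁.factorial = n₁ * (n₁-1).factorial := by
    have e : n₁ - 1 + 1 = n₁ := by omega
    rw [← e, Nat.factorial_succ, e]
  have efn2 : n₂.factorial = n₂ * (n₂-1).factorial := by
    have e : n₂ - 1 + 1 = n₂ := by omega
    rw [← e, Nat.factorial_succ, e]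
  have echoose_n : (n-1).choose (n₁-1) * (n₁-1).factorial * (n₂-1).factorial = (n-1).factorial := by
    have h := Nat.choose_mul_factorial_mul_factorial (show n₁-1 ≤ n-1 by omega)
    rwa [show n-1-(n₁-1) = n₂-1 by omega] at h
  have echoose_s : (n+l-1).choose (n₁+l₁-1) * (n₁+l₁-1).factorial * (n₂+(l-l₁)-1).factorial
      = (n+l-1).factorial := by
    have h := Nat.choose_mul_factorial_mul_factorial (show n₁+l₁-1 ≤ n+l-1 by omega)
    rwa [show n+l-1-(n₁+l₁-1) = n₂+(l-l₁)-1 by omega] at h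
  have echoose_lam : lam.choose lam₁ * lam₁.factorial * (lam-lam₁).factorial = lam.factorial :=
    Nat.choose_mul_factorial_mul_factorial hlam₁
  have hv : (n-1).choose (n₁-1) * l.choose l₁ ≤ (n+l-1).choose (n₁+l₁-1) := by
    have h := vand (n-1) l (n₁-1) l₁
    rwa [show n-1+l = n+l-1 by omega, show n₁-1+l₁ = n₁+l₁-1 by omega] at h
  have hcm : 1 ≤ (l-lam).choose (l₁-lam₁) := Nat.choose_pos (by omega)
  calc n.factorial * lam.factorial * (n₁ + l₁ - 1).factorial * (n₂ + (l-l₁) - 1).factorial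
        * (l.choose l₁) * (n₁ * n₂)
      = (n * (n₁-1).factorial * (n₂-1).factorial * lam.factorial * (n₁+l₁-1).factorial
          * (n₂+(l-l₁)-1).factorial * n₁ * n₂) * ((n-1).choose (n₁-1) * l.choose l₁) := by
        rw [efn, ← echoose_n]; ring
    _ ≤ (n * (n₁-1).factorial * (n₂-1).factorial * lam.factorial * (n₁+l₁-1).factorial
          * (n₂+(l-l₁)-1).factorial * n₁ * n₂)
        * ((n+l-1).choose (n₁+l₁-1) * ((l-lam).choose (l₁-lam₁))) := by
        refine Nat.mul_le_mul le_rfl ?_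
        calc (n-1).choose (n₁-1) * l.choose l₁ ≤ (n+l-1).choose (n₁+l₁-1) := hv
          _ ≤ (n+l-1).choose (n₁+l₁-1) * ((l-lam).choose (l₁-lam₁)) :=
            Nat.le_mul_of_pos_right _ hcm
    _ = n * (n₁.factorial * n₂.factorial) * (lam₁.factorial * (lam-lam₁).factorial)
        * (n+l-1).factorial * (lam.choose lam₁ * (l-lam).choose (l₁-lam₁)) := by
        rw [efn1, efn2, ← echoose_s, ← echoose_lam]; ring

lemma Asum (l : ℕ) :
    ∑ l₁ ∈ range (l+1), (1:ℝ)/((((l₁:ℝ)+1)^2) * (((l-l₁:ℕ):ℝ)+1)^2) ≤ 4/((l:ℝ)+1)^2 := by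
  have key : ∀ l₁ ∈ range (l+1),
      (1:ℝ)/((((l₁:ℝ)+1)^2) * (((l-l₁:ℕ):ℝ)+1)^2)
      = (1/((l:ℝ)+2)^2) * ((1:ℝ)/((l₁:ℝ)+1)^2) + (1/((l:ℝ)+2)^2) * ((1:ℝ)/(((l-l₁:ℕ):ℝ)+1)^2)
        + (2/((l:ℝ)+2)^3) * ((1:ℝ)/((l₁:ℝ)+1)) + (2/((l:ℝ)+2)^3) * ((1:ℝ)/(((l-l₁:ℕ):ℝ)+1)) := by
    intro l₁ hl₁
    have h1 : l₁ ≤ l := by simpa [Nat.lt_succ_iff] using hl₁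
    have hY : ((l-l₁:ℕ):ℝ) = (l:ℝ) - (l₁:ℝ) := by
      push_cast [h1]; ring
    have hc : (l₁:ℝ) ≤ (l:ℝ) := by exact_mod_cast h1
    rw [hY]
    have hX : (0:ℝ) < (l₁:ℝ)+1 := by positivity
    have hY' : (0:ℝ) < (l:ℝ)-(l₁:ℝ)+1 := by linarith
    have hL : (0:ℝ) < (l:ℝ)+2 := by positivity
    field_simp
    ring
  rw [Finset.sum_congr rfl key]
  rw [Finset.sum_add_distrib, Finset.sum_add_distrib, Finset.sum_add_distrib,
    ← Finset.mul_sum, ← Finset.mul_sum, ← Finset.mul_sum, ← Finset.mul_sum]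
  have refl2 : ∑ l₁ ∈ range (l+1), (1:ℝ)/(((l-l₁:ℕ):ℝ)+1)^2
      = ∑ l₁ ∈ range (l+1), (1:ℝ)/((l₁:ℝ)+1)^2 := by
    have := Finset.sum_range_reflect (fun j => (1:ℝ)/((j:ℝ)+1)^2) (l+1)
    simpa using this
  have refl1 : ∑ l₁ ∈ range (l+1), (1:ℝ)/(((l-l₁:ℕ):ℝ)+1)
      = ∑ l₁ ∈ range (l+1), (1:ℝ)/((l₁:ℝ)+1) := by
    have := Finset.sum_range_reflect (fun j => (1:ℝ)/((j:ℝ)+1)) (l+1)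
    simpa using this
  rw [refl1, refl2]
  have hS2 := S2_le (l+1)
  have hH := Hsum_le (l+1)
  push_cast at hS2 hH
  have hL : (0:ℝ) < (l:ℝ)+2 := by positivity
  have hl1 : (0:ℝ) < (l:ℝ)+1 := by positivity
  have c1 : (0:ℝ) ≤ 1/((l:ℝ)+2)^2 := by positivity
  have c2 : (0:ℝ) ≤ 2/((l:ℝ)+2)^3 := by positivity
  have step : (1/((l:ℝ)+2)^2) * (∑ l₁ ∈ range (l+1), (1:ℝ)/((l₁:ℝ)+1)^2)
      + (1/((l:ℝ)+2)^2) * (∑ l₁ ∈ range (l+1), (1:ℝ)/((l₁:ℝ)+1)^2)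
      + (2/((l:ℝ)+2)^3) * (∑ l₁ ∈ range (l+1), (1:ℝ)/((l₁:ℝ)+1))
      + (2/((l:ℝ)+2)^3) * (∑ l₁ ∈ range (l+1), (1:ℝ)/((l₁:ℝ)+1))
      ≤ (1/((l:ℝ)+2)^2) * (5/3) + (1/((l:ℝ)+2)^2) * (5/3)
      + (2/((l:ℝ)+2)^3) * (((l:ℝ)+1)/6+3/2) + (2/((l:ℝ)+2)^3) * (((l:ℝ)+1)/6+3/2) := by
    gcongr
  refine le_trans step ?_
  have e : (1/((l:ℝ)+2)^2) * (5/3) + (1/((l:ℝ)+2)^2) * (5/3)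
      + (2/((l:ℝ)+2)^3) * (((l:ℝ)+1)/6+3/2) + (2/((l:ℝ)+2)^3) * (((l:ℝ)+1)/6+3/2)
      = ((12*(l:ℝ)+40)/3) / ((l:ℝ)+2)^3 := by
    field_simp
    ring
  rw [e, div_le_div_iff₀ (by positivity) (by positivity)]
  nlinarith [Nat.cast_nonneg (α := ℝ) l]

lemma Bsum (n : ℕ) (hn : 1 ≤ n) :
    ∑ n₁ ∈ Icc 1 n, (n:ℝ)/(((n₁:ℝ)^3) * (((n+1-n₁:ℕ):ℝ)^3)) ≤ 5/(n:ℝ)^2 := by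
  have hIcc : Finset.Icc 1 n = Finset.Ico 1 (n+1) := by ext x; simp [Nat.lt_succ_iff]
  rw [hIcc, Finset.sum_Ico_eq_sum_range]
  simp only [Nat.add_sub_cancel]
  have key : ∀ k ∈ range n,
      (n:ℝ)/((((1+k:ℕ):ℝ)^3) * (((n+1-(1+k):ℕ):ℝ)^3))
      = ((n:ℝ)/((n:ℝ)+1)^3) * ((1:ℝ)/((k:ℝ)+1)^3)
      + ((n:ℝ)/((n:ℝ)+1)^3) * ((1:ℝ)/(((n-k:ℕ):ℝ))^3)
      + (3*(n:ℝ)/((n:ℝ)+1)^4) * ((1:ℝ)/((k:ℝ)+1)^2)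
      + (3*(n:ℝ)/((n:ℝ)+1)^4) * ((1:ℝ)/(((n-k:ℕ):ℝ))^2)
      + (6*(n:ℝ)/((n:ℝ)+1)^5) * ((1:ℝ)/((k:ℝ)+1))
      + (6*(n:ℝ)/((n:ℝ)+1)^5) * ((1:ℝ)/(((n-k:ℕ):ℝ))) := by
    intro k hk
    have hk' : k < n := Finset.mem_range.1 hk
    have e1 : ((1+k:ℕ):ℝ) = (k:ℝ)+1 := by push_cast; ring
    have e2 : (n+1-(1+k):ℕ) = n - k := by omega
    have e3 : ((n-k:ℕ):ℝ) = (n:ℝ) - (k:ℝ) := by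
      have : k ≤ n := le_of_lt hk'
      push_cast [this]; ring
    rw [e1, e2, e3]
    have h1 : (0:ℝ) < (k:ℝ)+1 := by positivity
    have h2 : (0:ℝ) < (n:ℝ)-(k:ℝ) := by
      have : (k:ℝ) < (n:ℝ) := by exact_mod_cast hk'
      linarith
    have h3 : (0:ℝ) < (n:ℝ)+1 := by positivity
    field_simp
    ring
  rw [Finset.sum_congr rfl key]
  rw [Finset.sum_add_distrib, Finset.sum_add_distrib, Finset.sum_add_distrib,
    Finset.sum_add_distrib, Finset.sum_add_distrib,
    ← Finset.mul_sum, ← Finset.mul_sum, ← Finset.mul_sum, ← Finset.mul_sum,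
    ← Finset.mul_sum, ← Finset.mul_sum]
  have refl3 : ∑ k ∈ range n, (1:ℝ)/(((n-k:ℕ):ℝ))^3 = ∑ k ∈ range n, (1:ℝ)/((k:ℝ)+1)^3 := by
    rw [← Finset.sum_range_reflect (fun j => (1:ℝ)/((j:ℝ)+1)^3) n]
    refine Finset.sum_congr rfl fun k hk => ?_
    have hk' : k < n := Finset.mem_range.1 hk
    have e : (n-1-k)+1 = n-k := by omega
    rw [show ((n-k:ℕ):ℝ) = ((n-1-k:ℕ):ℝ)+1 from by rw [← e]; push_cast; ring]
  have refl2 : ∑ k ∈ range n, (1:ℝ)/(((n-k:ℕ):ℝ))^2 = ∑ k ∈ range n, (1:ℝ)/((k:ℝ)+1)^2 := by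
    rw [← Finset.sum_range_reflect (fun j => (1:ℝ)/((j:ℝ)+1)^2) n]
    refine Finset.sum_congr rfl fun k hk => ?_
    have hk' : k < n := Finset.mem_range.1 hk
    have e : (n-1-k)+1 = n-k := by omega
    rw [show ((n-k:ℕ):ℝ) = ((n-1-k:ℕ):ℝ)+1 from by rw [← e]; push_cast; ring]
  have refl1 : ∑ k ∈ range n, (1:ℝ)/(((n-k:ℕ):ℝ)) = ∑ k ∈ range n, (1:ℝ)/((k:ℝ)+1) := by
    rw [← Finset.sum_range_reflect (fun j => (1:ℝ)/((j:ℝ)+1)) n]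
    refine Finset.sum_congr rfl fun k hk => ?_
    have hk' : k < n := Finset.mem_range.1 hk
    have e : (n-1-k)+1 = n-k := by omega
    rw [show ((n-k:ℕ):ℝ) = ((n-1-k:ℕ):ℝ)+1 from by rw [← e]; push_cast; ring]
  rw [refl1, refl2, refl3]
  have hS3 := S3_le n
  have hS2 := S2_le n
  have hH := Hsum_le n
  have hn' : (1:ℝ) ≤ (n:ℝ) := by exact_mod_cast hn
  have c3 : (0:ℝ) ≤ (n:ℝ)/((n:ℝ)+1)^3 := by positivity
  have c2 : (0:ℝ) ≤ 3*(n:ℝ)/((n:ℝ)+1)^4 := by positivity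
  have c1 : (0:ℝ) ≤ 6*(n:ℝ)/((n:ℝ)+1)^5 := by positivity
  have step : ((n:ℝ)/((n:ℝ)+1)^3) * (∑ k ∈ range n, (1:ℝ)/((k:ℝ)+1)^3)
      + ((n:ℝ)/((n:ℝ)+1)^3) * (∑ k ∈ range n, (1:ℝ)/((k:ℝ)+1)^3)
      + (3*(n:ℝ)/((n:ℝ)+1)^4) * (∑ k ∈ range n, (1:ℝ)/((k:ℝ)+1)^2)
      + (3*(n:ℝ)/((n:ℝ)+1)^4) * (∑ k ∈ range n, (1:ℝ)/((k:ℝ)+1)^2)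
      + (6*(n:ℝ)/((n:ℝ)+1)^5) * (∑ k ∈ range n, (1:ℝ)/((k:ℝ)+1))
      + (6*(n:ℝ)/((n:ℝ)+1)^5) * (∑ k ∈ range n, (1:ℝ)/((k:ℝ)+1))
      ≤ ((n:ℝ)/((n:ℝ)+1)^3) * (5/4) + ((n:ℝ)/((n:ℝ)+1)^3) * (5/4)
      + (3*(n:ℝ)/((n:ℝ)+1)^4) * (5/3) + (3*(n:ℝ)/((n:ℝ)+1)^4) * (5/3)
      + (6*(n:ℝ)/((n:ℝ)+1)^5) * ((n:ℝ)/6+3/2) + (6*(n:ℝ)/((n:ℝ)+1)^5) * ((n:ℝ)/6+3/2) := by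
    gcongr
  refine le_trans step ?_
  have e : ((n:ℝ)/((n:ℝ)+1)^3) * (5/4) + ((n:ℝ)/((n:ℝ)+1)^3) * (5/4)
      + (3*(n:ℝ)/((n:ℝ)+1)^4) * (5/3) + (3*(n:ℝ)/((n:ℝ)+1)^4) * (5/3)
      + (6*(n:ℝ)/((n:ℝ)+1)^5) * ((n:ℝ)/6+3/2) + (6*(n:ℝ)/((n:ℝ)+1)^5) * ((n:ℝ)/6+3/2)
      = ((5*(n:ℝ)/2)*((n:ℝ)+1)^2 + 10*(n:ℝ)*((n:ℝ)+1) + 2*(n:ℝ)^2+18*(n:ℝ)) / ((n:ℝ)+1)^5 := by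
    field_simp
    ring
  rw [e, div_le_div_iff₀ (by positivity) (by positivity)]
  nlinarith [mul_nonneg (sq_nonneg ((n:ℝ)-8)) (pow_nonneg (Nat.cast_nonneg (α := ℝ) n) 3), hn',
    pow_nonneg (Nat.cast_nonneg (α := ℝ) n) 2, pow_nonneg (Nat.cast_nonneg (α := ℝ) n) 4]

lemma term_le (n l lam l₁ n₁ lam₁ : ℕ) (hn₁ : 1 ≤ n₁) (hn₁n : n₁ ≤ n) (hl₁ : l₁ ≤ l)
    (hlam₁ : lam₁ ≤ lam) :
    (if lam₁ ≤ l₁ ∧ lam - lam₁ ≤ l - l₁ then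
      (1 : ℝ) /
          (((l₁ : ℝ) + 1) ^ 2 * ((l - l₁ : ℕ) + 1) ^ 2 * (n₁ : ℝ) ^ 2 *
            ((n + 1 - n₁ : ℕ) : ℝ) ^ 2) *
        ((Nat.factorial n : ℝ) /
          ((Nat.factorial n₁ : ℝ) * (Nat.factorial (n + 1 - n₁) : ℝ))) *
        ((Nat.factorial lam : ℝ) /
          ((Nat.factorial lam₁ : ℝ) * (Nat.factorial (lam - lam₁) : ℝ))) *
        ((Nat.factorial (n₁ + l₁ - 1) : ℝ) *
            (Nat.factorial ((n + 1 - n₁) + (l - l₁) - 1) : ℝ) /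
          (Nat.factorial (n + l - 1) : ℝ))
    else 0)
    ≤ ((1:ℝ)/((((l₁:ℝ)+1)^2) * (((l-l₁:ℕ):ℝ)+1)^2)) * ((n:ℝ)/(((n₁:ℝ)^3) * (((n+1-n₁:ℕ):ℝ)^3)))
      * (if lam₁ ≤ l₁ ∧ lam - lam₁ ≤ l - l₁ then
          ((lam.choose lam₁ * (l-lam).choose (l₁-lam₁) : ℕ) : ℝ) / ((l.choose l₁ : ℕ) : ℝ)
        else 0) := by
  by_cases hc : lam₁ ≤ l₁ ∧ lam - lam₁ ≤ l - l₁
  · rw [if_pos hc, if_pos hc]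
    have key := key_nat n l lam l₁ n₁ lam₁ hn₁ hn₁n hl₁ hlam₁ hc.1 hc.2
    have keyD := Nat.mul_le_mul_left ((l₁+1)^2 * ((l-l₁)+1)^2 * n₁^2 * (n+1-n₁)^2) key
    have hf1 : (0:ℝ) < (Nat.factorial n₁ : ℝ) := by exact_mod_cast Nat.factorial_pos n₁
    have hf2 : (0:ℝ) < (Nat.factorial (n+1-n₁) : ℝ) := by exact_mod_cast Nat.factorial_pos _
    have hf3 : (0:ℝ) < (Nat.factorial lam₁ : ℝ) := by exact_mod_cast Nat.factorial_pos _
    have hf4 : (0:ℝ) < (Nat.factorial (lam-lam₁) : ℝ) := by exact_mod_cast Nat.factorial_pos _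
    have hf5 : (0:ℝ) < (Nat.factorial (n+l-1) : ℝ) := by exact_mod_cast Nat.factorial_pos _
    have hcl : (0:ℝ) < ((l.choose l₁ : ℕ) : ℝ) := by exact_mod_cast Nat.choose_pos hl₁
    have hx1 : (0:ℝ) < ((l₁:ℝ)+1)^2 := by positivity
    have hx2 : (0:ℝ) < (((l-l₁:ℕ):ℝ)+1)^2 := by positivity
    have hx3 : (0:ℝ) < (n₁:ℝ)^2 := by positivity
    have hx3' : (0:ℝ) < (n₁:ℝ)^3 := by positivity
    have hn₂pos : (0:ℝ) < ((n+1-n₁:ℕ):ℝ) := by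
      have : 0 < n+1-n₁ := by omega
      exact_mod_cast this
    have hx4 : (0:ℝ) < ((n+1-n₁:ℕ):ℝ)^2 := by positivity
    have hx4' : (0:ℝ) < ((n+1-n₁:ℕ):ℝ)^3 := by positivity
    rw [div_mul_div_comm, div_mul_div_comm, div_mul_div_comm, div_mul_div_comm, div_mul_div_comm]
    rw [div_le_div_iff₀ (by positivity) (by positivity)]
    have keyR : ((((l₁+1)^2 * ((l-l₁)+1)^2 * n₁^2 * (n+1-n₁)^2 * (n.factorial * lam.factorial
        * (n₁ + l₁ - 1).factorial * ((n+1-n₁) + (l-l₁) - 1).factorial * (l.choose l₁)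
        * (n₁ * (n+1-n₁))) : ℕ)) : ℝ)
        ≤ ((((l₁+1)^2 * ((l-l₁)+1)^2 * n₁^2 * (n+1-n₁)^2 * (n * (n₁.factorial
        * (n+1-n₁).factorial) * (lam₁.factorial * (lam-lam₁).factorial)
        * (n+l-1).factorial * (lam.choose lam₁ * (l-lam).choose (l₁-lam₁))) : ℕ)) : ℝ) := by
      exact_mod_cast keyD
    convert keyR using 1
    all_goals (try (push_cast; ring))
    all_goals rfl
  · rw [if_neg hc, if_neg hc, mul_zero]

lemma Gsum_real (l lam l₁ : ℕ) (h : l₁ ≤ l) :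
    ∑ lam₁ ∈ Finset.range (lam+1), (if lam₁ ≤ l₁ ∧ lam - lam₁ ≤ l - l₁ then
      ((lam.choose lam₁ * (l-lam).choose (l₁-lam₁) : ℕ):ℝ)/((l.choose l₁ : ℕ):ℝ) else 0) ≤ 1 := by
  have hcl : (0:ℝ) < ((l.choose l₁:ℕ):ℝ) := by exact_mod_cast Nat.choose_pos h
  have e : ∀ lam₁ ∈ Finset.range (lam+1),
      (if lam₁ ≤ l₁ ∧ lam - lam₁ ≤ l - l₁ then
        ((lam.choose lam₁ * (l-lam).choose (l₁-lam₁) : ℕ):ℝ)/((l.choose l₁ : ℕ):ℝ) else 0)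
      = (if lam₁ ≤ l₁ ∧ lam - lam₁ ≤ l - l₁ then
        ((lam.choose lam₁ * (l-lam).choose (l₁-lam₁) : ℕ):ℝ) else 0)/((l.choose l₁ : ℕ):ℝ) := by
    intro x hx; split <;> simp
  rw [Finset.sum_congr rfl e, ← Finset.sum_div, div_le_one hcl]
  have hnat := Gsum_nat l lam l₁ h
  have hcast : ((∑ lam₁ ∈ Finset.range (lam+1),
      (if lam₁ ≤ l₁ ∧ lam - lam₁ ≤ l - l₁ then
        lam.choose lam₁ * (l-lam).choose (l₁-lam₁) else 0) : ℕ) : ℝ)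
      ≤ ((l.choose l₁ : ℕ):ℝ) := by exact_mod_cast hnat
  refine le_trans (le_of_eq ?_) hcast
  rw [Nat.cast_sum]
  exact Finset.sum_congr rfl fun x hx => by split <;> simp

/-- Combinatorial flow-equation inequality (eq. (1) of the paper): for integers
`n ≥ 1`, `l ≥ 0`, `λ ≥ 0`, the sum over all `l₁+l₂ = l` (`l₁,l₂ ≥ 0`),
`n₁+n₂ = n+1` (`n₁,n₂ ≥ 1`), `λ₁+λ₂ = λ` with `λ₁ ≤ l₁`, `λ₂ ≤ l₂`, of
`1/((l₁+1)²(l₂+1)²n₁²n₂²) · n!/(n₁!n₂!) · λ!/(λ₁!λ₂!) ·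
(n₁+l₁−1)!(n₂+l₂−1)!/(n+l−1)!` is at most `20/((l+1)²n²)`.
Here `l₂ = l − l₁`, `n₂ = n+1 − n₁`, `λ₂ = λ − λ₁`. -/
theorem stmt_10 (n l lam : ℕ) (hn : 1 ≤ n) :
    ∑ l₁ ∈ Finset.range (l + 1), ∑ n₁ ∈ Finset.Icc 1 n, ∑ lam₁ ∈ Finset.range (lam + 1),
        (if lam₁ ≤ l₁ ∧ lam - lam₁ ≤ l - l₁ then
          (1 : ℝ) /
              (((l₁ : ℝ) + 1) ^ 2 * ((l - l₁ : ℕ) + 1) ^ 2 * (n₁ : ℝ) ^ 2 *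
                ((n + 1 - n₁ : ℕ) : ℝ) ^ 2) *
            ((Nat.factorial n : ℝ) /
              ((Nat.factorial n₁ : ℝ) * (Nat.factorial (n + 1 - n₁) : ℝ))) *
            ((Nat.factorial lam : ℝ) /
              ((Nat.factorial lam₁ : ℝ) * (Nat.factorial (lam - lam₁) : ℝ))) *
            ((Nat.factorial (n₁ + l₁ - 1) : ℝ) *
                (Nat.factorial ((n + 1 - n₁) + (l - l₁) - 1) : ℝ) /
              (Nat.factorial (n + l - 1) : ℝ))
        else 0) ≤
      20 / (((l : ℝ) + 1) ^ 2 * (n : ℝ) ^ 2) := by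
  have hstep1 : ∑ l₁ ∈ Finset.range (l + 1), ∑ n₁ ∈ Finset.Icc 1 n, ∑ lam₁ ∈ Finset.range (lam + 1),
        (if lam₁ ≤ l₁ ∧ lam - lam₁ ≤ l - l₁ then
          (1 : ℝ) /
              (((l₁ : ℝ) + 1) ^ 2 * ((l - l₁ : ℕ) + 1) ^ 2 * (n₁ : ℝ) ^ 2 *
                ((n + 1 - n₁ : ℕ) : ℝ) ^ 2) *
            ((Nat.factorial n : ℝ) /
              ((Nat.factorial n₁ : ℝ) * (Nat.factorial (n + 1 - n₁) : ℝ))) *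
            ((Nat.factorial lam : ℝ) /
              ((Nat.factorial lam₁ : ℝ) * (Nat.factorial (lam - lam₁) : ℝ))) *
            ((Nat.factorial (n₁ + l₁ - 1) : ℝ) *
                (Nat.factorial ((n + 1 - n₁) + (l - l₁) - 1) : ℝ) /
              (Nat.factorial (n + l - 1) : ℝ))
        else 0)
      ≤ ∑ l₁ ∈ Finset.range (l + 1), ∑ n₁ ∈ Finset.Icc 1 n, ∑ lam₁ ∈ Finset.range (lam + 1),
        ((1:ℝ)/((((l₁:ℝ)+1)^2) * (((l-l₁:ℕ):ℝ)+1)^2))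
          * ((n:ℝ)/(((n₁:ℝ)^3) * (((n+1-n₁:ℕ):ℝ)^3)))
          * (if lam₁ ≤ l₁ ∧ lam - lam₁ ≤ l - l₁ then
              ((lam.choose lam₁ * (l-lam).choose (l₁-lam₁) : ℕ) : ℝ) / ((l.choose l₁ : ℕ) : ℝ)
            else 0) := by
    refine Finset.sum_le_sum fun l₁ hl₁ => Finset.sum_le_sum fun n₁ hn₁ =>
      Finset.sum_le_sum fun lam₁ hlam₁ => ?_
    have h1 : l₁ ≤ l := by simpa [Nat.lt_succ_iff] using hl₁
    obtain ⟨h2, h3⟩ := Finset.mem_Icc.1 hn₁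
    have h4 : lam₁ ≤ lam := by simpa [Nat.lt_succ_iff] using hlam₁
    exact term_le n l lam l₁ n₁ lam₁ h2 h3 h1 h4
  refine le_trans hstep1 ?_
  have hstep2 : ∀ l₁ ∈ Finset.range (l+1),
      (∑ n₁ ∈ Finset.Icc 1 n, ∑ lam₁ ∈ Finset.range (lam + 1),
        ((1:ℝ)/((((l₁:ℝ)+1)^2) * (((l-l₁:ℕ):ℝ)+1)^2))
          * ((n:ℝ)/(((n₁:ℝ)^3) * (((n+1-n₁:ℕ):ℝ)^3)))
          * (if lam₁ ≤ l₁ ∧ lam - lam₁ ≤ l - l₁ then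
              ((lam.choose lam₁ * (l-lam).choose (l₁-lam₁) : ℕ) : ℝ) / ((l.choose l₁ : ℕ) : ℝ)
            else 0))
      ≤ ((1:ℝ)/((((l₁:ℝ)+1)^2) * (((l-l₁:ℕ):ℝ)+1)^2))
          * (∑ n₁ ∈ Finset.Icc 1 n, (n:ℝ)/(((n₁:ℝ)^3) * (((n+1-n₁:ℕ):ℝ)^3))) := by
    intro l₁ hl₁
    have h1 : l₁ ≤ l := by simpa [Nat.lt_succ_iff] using hl₁
    have e : ∑ n₁ ∈ Finset.Icc 1 n, ∑ lam₁ ∈ Finset.range (lam + 1),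
        ((1:ℝ)/((((l₁:ℝ)+1)^2) * (((l-l₁:ℕ):ℝ)+1)^2))
          * ((n:ℝ)/(((n₁:ℝ)^3) * (((n+1-n₁:ℕ):ℝ)^3)))
          * (if lam₁ ≤ l₁ ∧ lam - lam₁ ≤ l - l₁ then
              ((lam.choose lam₁ * (l-lam).choose (l₁-lam₁) : ℕ) : ℝ) / ((l.choose l₁ : ℕ) : ℝ)
            else 0)
        = ∑ n₁ ∈ Finset.Icc 1 n,
          (((1:ℝ)/((((l₁:ℝ)+1)^2) * (((l-l₁:ℕ):ℝ)+1)^2))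
          * ((n:ℝ)/(((n₁:ℝ)^3) * (((n+1-n₁:ℕ):ℝ)^3))))
          * (∑ lam₁ ∈ Finset.range (lam + 1), (if lam₁ ≤ l₁ ∧ lam - lam₁ ≤ l - l₁ then
              ((lam.choose lam₁ * (l-lam).choose (l₁-lam₁) : ℕ) : ℝ) / ((l.choose l₁ : ℕ) : ℝ)
            else 0)) := by
      refine Finset.sum_congr rfl fun n₁ _ => ?_
      rw [Finset.mul_sum]
    rw [e, Finset.mul_sum]
    refine Finset.sum_le_sum fun n₁ hn₁ => ?_
    obtain ⟨h2, h3⟩ := Finset.mem_Icc.1 hn₁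
    have hn₂pos : (0:ℝ) < ((n+1-n₁:ℕ):ℝ) := by
      have : 0 < n+1-n₁ := by omega
      exact_mod_cast this
    have hF : (0:ℝ) ≤ ((1:ℝ)/((((l₁:ℝ)+1)^2) * (((l-l₁:ℕ):ℝ)+1)^2))
        * ((n:ℝ)/(((n₁:ℝ)^3) * (((n+1-n₁:ℕ):ℝ)^3))) := by positivity
    calc ((1:ℝ)/((((l₁:ℝ)+1)^2) * (((l-l₁:ℕ):ℝ)+1)^2))
          * ((n:ℝ)/(((n₁:ℝ)^3) * (((n+1-n₁:ℕ):ℝ)^3)))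
          * (∑ lam₁ ∈ Finset.range (lam + 1), (if lam₁ ≤ l₁ ∧ lam - lam₁ ≤ l - l₁ then
              ((lam.choose lam₁ * (l-lam).choose (l₁-lam₁) : ℕ) : ℝ) / ((l.choose l₁ : ℕ) : ℝ)
            else 0))
        ≤ ((1:ℝ)/((((l₁:ℝ)+1)^2) * (((l-l₁:ℕ):ℝ)+1)^2))
          * ((n:ℝ)/(((n₁:ℝ)^3) * (((n+1-n₁:ℕ):ℝ)^3))) * 1 :=
          mul_le_mul_of_nonneg_left (Gsum_real l lam l₁ h1) hF
      _ = ((1:ℝ)/((((l₁:ℝ)+1)^2) * (((l-l₁:ℕ):ℝ)+1)^2))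
          * ((n:ℝ)/(((n₁:ℝ)^3) * (((n+1-n₁:ℕ):ℝ)^3))) := by rw [mul_one]
  calc ∑ l₁ ∈ Finset.range (l + 1), ∑ n₁ ∈ Finset.Icc 1 n, ∑ lam₁ ∈ Finset.range (lam + 1),
        ((1:ℝ)/((((l₁:ℝ)+1)^2) * (((l-l₁:ℕ):ℝ)+1)^2))
          * ((n:ℝ)/(((n₁:ℝ)^3) * (((n+1-n₁:ℕ):ℝ)^3)))
          * (if lam₁ ≤ l₁ ∧ lam - lam₁ ≤ l - l₁ then
              ((lam.choose lam₁ * (l-lam).choose (l₁-lam₁) : ℕ) : ℝ) / ((l.choose l₁ : ℕ) : ℝ)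
            else 0)
      ≤ ∑ l₁ ∈ Finset.range (l + 1),
        ((1:ℝ)/((((l₁:ℝ)+1)^2) * (((l-l₁:ℕ):ℝ)+1)^2))
          * (∑ n₁ ∈ Finset.Icc 1 n, (n:ℝ)/(((n₁:ℝ)^3) * (((n+1-n₁:ℕ):ℝ)^3))) :=
        Finset.sum_le_sum hstep2
    _ = (∑ l₁ ∈ Finset.range (l + 1), (1:ℝ)/((((l₁:ℝ)+1)^2) * (((l-l₁:ℕ):ℝ)+1)^2))
          * (∑ n₁ ∈ Finset.Icc 1 n, (n:ℝ)/(((n₁:ℝ)^3) * (((n+1-n₁:ℕ):ℝ)^3))) := by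
        rw [Finset.sum_mul]
    _ ≤ (4/((l:ℝ)+1)^2) * (5/(n:ℝ)^2) := by
        refine mul_le_mul (Asum l) (Bsum n hn) ?_ (by positivity)
        refine Finset.sum_nonneg fun n₁ hn₁ => ?_
        positivity
    _ = 20 / (((l : ℝ) + 1) ^ 2 * (n : ℝ) ^ 2) := by
        rw [div_mul_div_comm]
        norm_num
end

section
/- Let m > 0, 0 < Λ ≤ Λ₀, let s ≥ 1 and l ≥ 1 be integers, and let P ≥ 0 be a real number. Writing κ' := max(Λ', m) and κ := max(Λ, m), one has Σ_{λ=0}^{l−1} (1/(2^λ·λ!)) ∫_Λ^{Λ₀} Λ'^{−s−1} · [ log^λ(max(P/κ', κ'/m)) + √(λ!) ] dΛ' ≤ 5 · (Λ^{−s}/s) · Σ_{λ=0}^{l−1} (1/(2^λ·λ!)) · log^λ(max(P/κ, κ/m)). -/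
open Finset

lemma aux_exp (a b : ℝ) (ha : 0 ≤ a) (hb : 0 ≤ b) (l : ℕ) :
    ∑ n ∈ range l, (a + b) ^ n / (Nat.factorial n : ℝ) ≤
      (∑ k ∈ range l, a ^ k / (Nat.factorial k : ℝ)) * Real.exp b := by
  calc ∑ n ∈ range l, (a + b) ^ n / (Nat.factorial n : ℝ)
      = ∑ n ∈ range l, ∑ k ∈ range l,
          (if k ≤ n then a ^ k / (Nat.factorial k : ℝ) *
            (b ^ (n - k) / (Nat.factorial (n - k) : ℝ)) else 0) := by
        refine Finset.sum_congr rfl fun n hn => ?_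
        rw [Finset.mem_range] at hn
        have hfil : (range l).filter (fun k => k ≤ n) = range (n + 1) := by
          ext k; simp [Nat.lt_succ_iff]; omega
        rw [← Finset.sum_filter, hfil, add_pow, Finset.sum_div]
        refine Finset.sum_congr rfl fun k hk => ?_
        rw [Finset.mem_range, Nat.lt_succ_iff] at hk
        rw [Nat.cast_choose ℝ hk]
        have h1 : (Nat.factorial n : ℝ) ≠ 0 := Nat.cast_ne_zero.2 (Nat.factorial_ne_zero n)
        have h2 : (Nat.factorial k : ℝ) ≠ 0 := Nat.cast_ne_zero.2 (Nat.factorial_ne_zero k)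
        have h3 : (Nat.factorial (n - k) : ℝ) ≠ 0 := Nat.cast_ne_zero.2 (Nat.factorial_ne_zero _)
        field_simp
    _ = ∑ k ∈ range l, ∑ n ∈ range l,
          (if k ≤ n then a ^ k / (Nat.factorial k : ℝ) *
            (b ^ (n - k) / (Nat.factorial (n - k) : ℝ)) else 0) := Finset.sum_comm
    _ ≤ ∑ k ∈ range l, a ^ k / (Nat.factorial k : ℝ) * Real.exp b := by
        refine Finset.sum_le_sum fun k hk => ?_
        have hfil : (range l).filter (fun n => k ≤ n) = Finset.Ico k l := by
          ext n; simp [Finset.mem_Ico]; omega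
        rw [← Finset.sum_filter, hfil]
        have h1 : ∑ n ∈ Finset.Ico k l, a ^ k / (Nat.factorial k : ℝ) *
            (b ^ (n - k) / (Nat.factorial (n - k) : ℝ))
            = a ^ k / (Nat.factorial k : ℝ) *
              ∑ i ∈ range (l - k), b ^ i / (Nat.factorial i : ℝ) := by
          rw [Finset.sum_Ico_eq_sum_range, Finset.mul_sum]
          simp
        rw [h1]
        have hak : 0 ≤ a ^ k / (Nat.factorial k : ℝ) := by positivity
        exact mul_le_mul_of_nonneg_left (Real.sum_le_exp_of_nonneg hb _) hak
    _ = (∑ k ∈ range l, a ^ k / (Nat.factorial k : ℝ)) * Real.exp b := by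
        rw [Finset.sum_mul]

/-- Flow-parameter integration estimate (eq. (log) of the paper): for `0 < Λ ≤ Λ₀`,
`m > 0`, integers `s ≥ 1`, `l ≥ 1` and `P ≥ 0`, with `κ' = max(Λ',m)`,
`κ = max(Λ,m)`:
`Σ_{λ=0}^{l−1} (1/(2^λ λ!)) ∫_Λ^{Λ₀} Λ'^{−s−1}[log^λ(max(P/κ',κ'/m)) + √(λ!)] dΛ'
  ≤ 5 (Λ^{−s}/s) Σ_{λ=0}^{l−1} (1/(2^λ λ!)) log^λ(max(P/κ,κ/m))`. -/
theorem stmt_11 (m Λ Λ₀ : ℝ) (hm : 0 < m) (hΛ : 0 < Λ) (hΛΛ₀ : Λ ≤ Λ₀)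
    (s l : ℕ) (hs : 1 ≤ s) (hl : 1 ≤ l) (P : ℝ) (hP : 0 ≤ P) :
    ∑ lam ∈ Finset.range l,
        1 / ((2 : ℝ) ^ lam * (Nat.factorial lam : ℝ)) *
          ∫ t in Λ..Λ₀,
            ((Real.log (max (P / max t m) (max t m / m))) ^ lam +
                Real.sqrt (Nat.factorial lam)) / t ^ (s + 1) ≤
      5 * ((Λ ^ s)⁻¹ / (s : ℝ)) *
        ∑ lam ∈ Finset.range l,
          1 / ((2 : ℝ) ^ lam * (Nat.factorial lam : ℝ)) *
            (Real.log (max (P / max Λ m) (max Λ m / m))) ^ lam := by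
  have hκm : m ≤ max Λ m := le_max_right _ _
  have hκΛ : Λ ≤ max Λ m := le_max_left _ _
  have hκ0 : (0:ℝ) < max Λ m := lt_of_lt_of_le hm hκm
  set M := max (P / max Λ m) (max Λ m / m) with hMdef
  have hM1 : (1:ℝ) ≤ M := le_max_of_le_right ((one_le_div hm).2 hκm)
  set L := Real.log M with hLdef
  have hL0 : 0 ≤ L := Real.log_nonneg hM1
  set S := ∑ lam ∈ Finset.range l, 1 / ((2:ℝ)^lam * (Nat.factorial lam : ℝ)) * L ^ lam with hSdef
  have hS1 : (1:ℝ) ≤ S := by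
    have h0 : (0:ℕ) ∈ Finset.range l := Finset.mem_range.2 hl
    have h := Finset.single_le_sum (f := fun lam =>
      1 / ((2:ℝ)^lam * (Nat.factorial lam : ℝ)) * L ^ lam) (fun i _ => by positivity) h0
    calc (1:ℝ) = 1 / ((2:ℝ)^(0:ℕ) * (Nat.factorial 0 : ℝ)) * L ^ (0:ℕ) := by norm_num
      _ ≤ S := h
  have hS0 : (0:ℝ) ≤ S := le_trans zero_le_one hS1
  set F : ℝ → ℝ := fun t => Real.log (max (P / max t m) (max t m / m)) with hFdef
  -- basic facts on Icc
  have htpos : ∀ t ∈ Set.Icc Λ Λ₀, 0 < t := fun t ht => lt_of_lt_of_le hΛ ht.1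
  have hmaxpos : ∀ t : ℝ, (0:ℝ) < max t m := fun t => lt_of_lt_of_le hm (le_max_right _ _)
  have harg1 : ∀ t : ℝ, (1:ℝ) ≤ max (P / max t m) (max t m / m) :=
    fun t => le_max_of_le_right ((one_le_div hm).2 (le_max_right _ _))
  have hF0 : ∀ t : ℝ, 0 ≤ F t := fun t => Real.log_nonneg (harg1 t)
  have hFle : ∀ t ∈ Set.Icc Λ Λ₀, F t ≤ L + Real.log (t / Λ) := by
    intro t ht
    have htΛ : Λ ≤ t := ht.1
    have ht0 : 0 < t := htpos t ht
    have htΛ1 : (1:ℝ) ≤ t / Λ := (one_le_div hΛ).2 htΛ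
    have hmax : max Λ m ≤ max t m := max_le_max htΛ le_rfl
    have hM0 : (0:ℝ) < M := lt_of_lt_of_le one_pos hM1
    have h1 : P / max t m ≤ M * (t / Λ) := by
      calc P / max t m ≤ P / max Λ m := by gcongr
        _ ≤ M := le_max_left _ _
        _ ≤ M * (t / Λ) := le_mul_of_one_le_right hM0.le htΛ1
    have h2 : max t m / m ≤ M * (t / Λ) := by
      have hkey : max t m ≤ t / Λ * max Λ m := by
        apply max_le
        · calc t = t / Λ * Λ := by field_simp
            _ ≤ t / Λ * max Λ m := by gcongr
        · calc m ≤ max Λ m := hκm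
            _ ≤ t / Λ * max Λ m := le_mul_of_one_le_left hκ0.le htΛ1
      calc max t m / m ≤ (t / Λ * max Λ m) / m := by gcongr
        _ = t / Λ * (max Λ m / m) := by ring
        _ ≤ t / Λ * M := by gcongr; exact le_max_right _ _
        _ = M * (t / Λ) := mul_comm _ _
    have hmle : max (P / max t m) (max t m / m) ≤ M * (t / Λ) := max_le h1 h2
    calc F t ≤ Real.log (M * (t / Λ)) := by
          apply Real.log_le_log (lt_of_lt_of_le one_pos (harg1 t)) hmle
      _ = L + Real.log (t / Λ) := by
          rw [Real.log_mul hM0.ne' (div_pos ht0 hΛ).ne']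
  -- continuity and integrability
  have hc1 : ContinuousOn (fun t : ℝ => max t m) (Set.Icc Λ Λ₀) :=
    (continuous_id.max continuous_const).continuousOn
  have hc2 : Continuous (fun t : ℝ => max (P / max t m) (max t m / m)) :=
    ((continuous_const.div (continuous_id.max continuous_const)
        (fun t => (hmaxpos t).ne')).max ((continuous_id.max continuous_const).div_const m))
  have hcF : ContinuousOn F (Set.Icc Λ Λ₀) :=
    hc2.continuousOn.log (fun t _ => by have := harg1 t; positivity)
  have hcden : ContinuousOn (fun t : ℝ => t ^ (s+1)) (Set.Icc Λ Λ₀) :=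
    (continuous_pow (s+1)).continuousOn
  have hdenne : ∀ t ∈ Set.Icc Λ Λ₀, t ^ (s+1) ≠ 0 :=
    fun t ht => pow_ne_zero _ (htpos t ht).ne'
  have hInt : ∀ lam : ℕ, IntervalIntegrable
      (fun t => ((F t) ^ lam + Real.sqrt (Nat.factorial lam)) / t ^ (s+1)) MeasureTheory.volume Λ Λ₀ := by
    intro lam
    apply ContinuousOn.intervalIntegrable
    rw [Set.uIcc_of_le hΛΛ₀]
    exact ((hcF.pow lam).add continuousOn_const).div hcden hdenne
  -- bound functions
  set r1 : ℝ := (1:ℝ)/2 - ((s:ℝ)+1) with hr1def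
  set r2 : ℝ := -((s:ℝ)+1) with hr2def
  have h0notin : (0:ℝ) ∉ Set.uIcc Λ Λ₀ := by
    rw [Set.uIcc_of_le hΛΛ₀]
    intro h; exact absurd h.1 (not_le.2 hΛ)
  set B : ℝ → ℝ := fun t => S * Λ ^ (-(1:ℝ)/2) * t ^ r1 + 2 * t ^ r2 with hBdef
  have hIntB : IntervalIntegrable B MeasureTheory.volume Λ Λ₀ := by
    exact ((intervalIntegral.intervalIntegrable_rpow (Or.inr h0notin)).const_mul _).add
      ((intervalIntegral.intervalIntegrable_rpow (Or.inr h0notin)).const_mul _)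
  -- pointwise bound for the summed integrand
  set G : ℝ → ℝ := fun t =>
    (∑ lam ∈ Finset.range l, 1 / ((2:ℝ)^lam * (Nat.factorial lam : ℝ)) *
      ((F t) ^ lam + Real.sqrt (Nat.factorial lam))) / t ^ (s+1) with hGdef
  have hIntG : IntervalIntegrable G MeasureTheory.volume Λ Λ₀ := by
    apply ContinuousOn.intervalIntegrable
    rw [Set.uIcc_of_le hΛΛ₀]
    refine ContinuousOn.div ?_ hcden hdenne
    exact continuousOn_finset_sum _ fun lam _ =>
      continuousOn_const.mul ((hcF.pow lam).add continuousOn_const)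
  have hGB : ∀ t ∈ Set.Icc Λ Λ₀, G t ≤ B t := by
    intro t ht
    have ht0 : 0 < t := htpos t ht
    have htΛ : Λ ≤ t := ht.1
    have hu0 : 0 ≤ Real.log (t / Λ) := Real.log_nonneg ((one_le_div hΛ).2 htΛ)
    have hA : ∑ lam ∈ Finset.range l, 1 / ((2:ℝ)^lam * (Nat.factorial lam : ℝ)) * (F t) ^ lam
        ≤ S * (t / Λ) ^ ((1:ℝ)/2) := by
      calc ∑ lam ∈ Finset.range l, 1 / ((2:ℝ)^lam * (Nat.factorial lam : ℝ)) * (F t) ^ lam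
          = ∑ lam ∈ Finset.range l, (F t / 2) ^ lam / (Nat.factorial lam : ℝ) := by
            refine Finset.sum_congr rfl fun lam _ => ?_
            rw [div_pow]; ring
        _ ≤ ∑ lam ∈ Finset.range l,
              (L / 2 + Real.log (t / Λ) / 2) ^ lam / (Nat.factorial lam : ℝ) := by
            refine Finset.sum_le_sum fun lam _ => ?_
            gcongr
            · exact div_nonneg (hF0 t) (by norm_num)
            · have := hFle t ht; linarith
        _ ≤ (∑ k ∈ Finset.range l, (L / 2) ^ k / (Nat.factorial k : ℝ)) *
              Real.exp (Real.log (t / Λ) / 2) :=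
            aux_exp (L / 2) (Real.log (t / Λ) / 2) (by positivity) (by positivity) l
        _ = S * (t / Λ) ^ ((1:ℝ)/2) := by
            congr 1
            · rw [hSdef]
              refine Finset.sum_congr rfl fun k _ => ?_
              rw [div_pow]; ring
            · rw [Real.rpow_def_of_pos (div_pos ht0 hΛ), mul_one_div]
    have hB2 : ∑ lam ∈ Finset.range l,
        1 / ((2:ℝ)^lam * (Nat.factorial lam : ℝ)) * Real.sqrt (Nat.factorial lam) ≤ 2 := by
      calc ∑ lam ∈ Finset.range l,
            1 / ((2:ℝ)^lam * (Nat.factorial lam : ℝ)) * Real.sqrt (Nat.factorial lam)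
          ≤ ∑ lam ∈ Finset.range l, (1/2:ℝ) ^ lam := by
            refine Finset.sum_le_sum fun lam _ => ?_
            have h1 : (1:ℝ) ≤ (Nat.factorial lam : ℝ) :=
              Nat.one_le_cast.2 (Nat.one_le_iff_ne_zero.2 (Nat.factorial_ne_zero lam))
            have h2 : Real.sqrt (Nat.factorial lam) ≤ (Nat.factorial lam : ℝ) := by
              nlinarith [Real.sq_sqrt (by positivity : (0:ℝ) ≤ (Nat.factorial lam : ℝ)),
                Real.sqrt_nonneg ((Nat.factorial lam : ℝ)), h1]
            calc 1 / ((2:ℝ)^lam * (Nat.factorial lam : ℝ)) * Real.sqrt (Nat.factorial lam)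
                ≤ 1 / ((2:ℝ)^lam * (Nat.factorial lam : ℝ)) * (Nat.factorial lam : ℝ) := by
                  gcongr
              _ = (1/2:ℝ) ^ lam := by
                  rw [div_pow, one_pow]
                  field_simp
        _ ≤ 2 := sum_geometric_two_le l
    have hnum : (∑ lam ∈ Finset.range l, 1 / ((2:ℝ)^lam * (Nat.factorial lam : ℝ)) *
        ((F t) ^ lam + Real.sqrt (Nat.factorial lam))) ≤ S * (t / Λ) ^ ((1:ℝ)/2) + 2 := by
      have hsplit : (∑ lam ∈ Finset.range l, 1 / ((2:ℝ)^lam * (Nat.factorial lam : ℝ)) *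
          ((F t) ^ lam + Real.sqrt (Nat.factorial lam)))
          = (∑ lam ∈ Finset.range l, 1 / ((2:ℝ)^lam * (Nat.factorial lam : ℝ)) * (F t) ^ lam)
            + ∑ lam ∈ Finset.range l,
                1 / ((2:ℝ)^lam * (Nat.factorial lam : ℝ)) * Real.sqrt (Nat.factorial lam) := by
        rw [← Finset.sum_add_distrib]
        exact Finset.sum_congr rfl fun lam _ => by ring
      rw [hsplit]; exact add_le_add hA hB2
    have hpow : (0:ℝ) < t ^ (s+1) := by positivity
    have ecast : ((s:ℝ) + 1) = ((s + 1 : ℕ) : ℝ) := by push_cast; ring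
    have h3 : t ^ r1 = t ^ ((1:ℝ)/2) / t ^ (s+1) := by
      rw [hr1def, Real.rpow_sub ht0, ecast, Real.rpow_natCast]
    have h4 : t ^ r2 = 1 / t ^ (s+1) := by
      rw [hr2def, Real.rpow_neg ht0.le, ecast, Real.rpow_natCast, one_div]
    have h2' : (t / Λ) ^ ((1:ℝ)/2) = t ^ ((1:ℝ)/2) * Λ ^ (-(1:ℝ)/2) := by
      rw [Real.div_rpow ht0.le hΛ.le, div_eq_mul_inv, ← Real.rpow_neg hΛ.le, neg_div]
    calc G t = (∑ lam ∈ Finset.range l, 1 / ((2:ℝ)^lam * (Nat.factorial lam : ℝ)) *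
            ((F t) ^ lam + Real.sqrt (Nat.factorial lam))) / t ^ (s+1) := rfl
      _ ≤ (S * (t / Λ) ^ ((1:ℝ)/2) + 2) / t ^ (s+1) := by gcongr
      _ = B t := by
          simp only [hBdef]
          rw [h3, h4, h2']
          field_simp
  -- LHS equals the integral of G
  have hLHS : (∑ lam ∈ Finset.range l,
      1 / ((2 : ℝ) ^ lam * (Nat.factorial lam : ℝ)) *
        ∫ t in Λ..Λ₀, ((F t) ^ lam + Real.sqrt (Nat.factorial lam)) / t ^ (s + 1))
      = ∫ t in Λ..Λ₀, G t := by
    have e1 : ∀ lam ∈ Finset.range l,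
        1 / ((2 : ℝ) ^ lam * (Nat.factorial lam : ℝ)) *
          ∫ t in Λ..Λ₀, ((F t) ^ lam + Real.sqrt (Nat.factorial lam)) / t ^ (s + 1)
        = ∫ t in Λ..Λ₀, 1 / ((2 : ℝ) ^ lam * (Nat.factorial lam : ℝ)) *
            (((F t) ^ lam + Real.sqrt (Nat.factorial lam)) / t ^ (s + 1)) :=
      fun lam _ => (intervalIntegral.integral_const_mul _ _).symm
    rw [Finset.sum_congr rfl e1,
      ← intervalIntegral.integral_finset_sum (fun lam _ => (hInt lam).const_mul _)]
    refine intervalIntegral.integral_congr fun t _ => ?_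
    simp only [hGdef, Finset.sum_div, mul_div_assoc]
  -- integral of B
  have hIB : (∫ t in Λ..Λ₀, B t) ≤ 4 * S * ((Λ ^ s)⁻¹ / (s:ℝ)) := by
    have hs1 : (1:ℝ) ≤ (s:ℝ) := by exact_mod_cast hs
    have hs0 : (0:ℝ) < (s:ℝ) := by linarith
    have hd1 : (0:ℝ) < (s:ℝ) - 1/2 := by linarith
    have hΛ₀ : (0:ℝ) < Λ₀ := lt_of_lt_of_le hΛ hΛΛ₀
    have hr1ne : r1 ≠ -1 := by
      rw [hr1def]; intro h; linarith
    have hr2ne : r2 ≠ -1 := by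
      rw [hr2def]; intro h; linarith
    have hint1 : IntervalIntegrable (fun t:ℝ => t ^ r1) MeasureTheory.volume Λ Λ₀ :=
      intervalIntegral.intervalIntegrable_rpow (Or.inr h0notin)
    have hint2 : IntervalIntegrable (fun t:ℝ => t ^ r2) MeasureTheory.volume Λ Λ₀ :=
      intervalIntegral.intervalIntegrable_rpow (Or.inr h0notin)
    have hc1 : r1 + 1 = 1/2 - (s:ℝ) := by rw [hr1def]; ring
    have hc2 : r2 + 1 = -(s:ℝ) := by rw [hr2def]; ring
    have hp1 : (0:ℝ) ≤ Λ₀ ^ (r1+1) := Real.rpow_nonneg hΛ₀.le _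
    have hp2 : (0:ℝ) ≤ Λ₀ ^ (r2+1) := Real.rpow_nonneg hΛ₀.le _
    have hq1 : (Λ₀ ^ (r1+1) - Λ ^ (r1+1)) / (r1+1) ≤ Λ ^ (r1+1) * (2 / (s:ℝ)) := by
      have h1 : (Λ₀ ^ (r1+1) - Λ ^ (r1+1)) / (r1+1)
          = (Λ ^ (r1+1) - Λ₀ ^ (r1+1)) / ((s:ℝ) - 1/2) := by
        rw [hc1]
        have hne : (s:ℝ) - 1/2 ≠ 0 := hd1.ne'
        have hne2 : (1:ℝ)/2 - (s:ℝ) ≠ 0 := by intro h; apply hne; linarith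
        rw [div_eq_div_iff hne2 hne]
        ring
      rw [h1]
      calc (Λ ^ (r1+1) - Λ₀ ^ (r1+1)) / ((s:ℝ) - 1/2)
          ≤ Λ ^ (r1+1) / ((s:ℝ) - 1/2) := (div_le_div_iff_of_pos_right hd1).2 (by linarith)
        _ ≤ Λ ^ (r1+1) * (2 / (s:ℝ)) := by
            rw [div_eq_mul_inv]
            apply mul_le_mul_of_nonneg_left ?_ (Real.rpow_nonneg hΛ.le _)
            rw [inv_eq_one_div, div_le_div_iff₀ hd1 hs0]
            linarith
    have hq2 : (Λ₀ ^ (r2+1) - Λ ^ (r2+1)) / (r2+1) ≤ Λ ^ (r2+1) / (s:ℝ) := by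
      have h1 : (Λ₀ ^ (r2+1) - Λ ^ (r2+1)) / (r2+1)
          = (Λ ^ (r2+1) - Λ₀ ^ (r2+1)) / (s:ℝ) := by
        rw [hc2]
        have hne : (s:ℝ) ≠ 0 := hs0.ne'
        have hne2 : -(s:ℝ) ≠ 0 := neg_ne_zero.2 hne
        rw [div_eq_div_iff hne2 hne]
        ring
      rw [h1]
      exact (div_le_div_iff_of_pos_right hs0).2 (by linarith)
    have hΛr1 : Λ ^ (-(1:ℝ)/2) * Λ ^ (r1+1) = (Λ ^ s)⁻¹ := by
      rw [← Real.rpow_add hΛ,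
        show (-(1:ℝ)/2 + (r1+1) : ℝ) = -(s:ℝ) by rw [hc1]; ring,
        Real.rpow_neg hΛ.le, Real.rpow_natCast]
    have hΛr2 : Λ ^ (r2+1) = (Λ ^ s)⁻¹ := by
      rw [hc2, Real.rpow_neg hΛ.le, Real.rpow_natCast]
    have hX : (0:ℝ) ≤ (Λ ^ s)⁻¹ / (s:ℝ) := by positivity
    have hnn : (0:ℝ) ≤ S * Λ ^ (-(1:ℝ)/2) := mul_nonneg hS0 (Real.rpow_nonneg hΛ.le _)
    simp only [hBdef]
    rw [intervalIntegral.integral_add (hint1.const_mul _) (hint2.const_mul _),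
      intervalIntegral.integral_const_mul, intervalIntegral.integral_const_mul,
      integral_rpow (Or.inr ⟨hr1ne, h0notin⟩), integral_rpow (Or.inr ⟨hr2ne, h0notin⟩)]
    calc S * Λ ^ (-(1:ℝ)/2) * ((Λ₀ ^ (r1+1) - Λ ^ (r1+1)) / (r1+1))
          + 2 * ((Λ₀ ^ (r2+1) - Λ ^ (r2+1)) / (r2+1))
        ≤ S * Λ ^ (-(1:ℝ)/2) * (Λ ^ (r1+1) * (2 / (s:ℝ)))
          + 2 * (Λ ^ (r2+1) / (s:ℝ)) :=
          add_le_add (mul_le_mul_of_nonneg_left hq1 hnn)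
            (mul_le_mul_of_nonneg_left hq2 (by norm_num))
      _ = 2 * S * ((Λ ^ (-(1:ℝ)/2) * Λ ^ (r1+1)) / (s:ℝ)) + 2 * (Λ ^ (r2+1) / (s:ℝ)) := by
          ring
      _ = 2 * S * ((Λ ^ s)⁻¹ / (s:ℝ)) + 2 * ((Λ ^ s)⁻¹ / (s:ℝ)) := by
          rw [hΛr1, hΛr2]
      _ ≤ 4 * S * ((Λ ^ s)⁻¹ / (s:ℝ)) := by
          have h1x : (1:ℝ) * ((Λ ^ s)⁻¹ / (s:ℝ)) ≤ S * ((Λ ^ s)⁻¹ / (s:ℝ)) :=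
            mul_le_mul_of_nonneg_right hS1 hX
          linarith
  calc (∑ lam ∈ Finset.range l,
      1 / ((2 : ℝ) ^ lam * (Nat.factorial lam : ℝ)) *
        ∫ t in Λ..Λ₀, ((F t) ^ lam + Real.sqrt (Nat.factorial lam)) / t ^ (s + 1))
      = ∫ t in Λ..Λ₀, G t := hLHS
    _ ≤ ∫ t in Λ..Λ₀, B t := by
        exact intervalIntegral.integral_mono_on hΛΛ₀ hIntG hIntB hGB
    _ ≤ 4 * S * ((Λ ^ s)⁻¹ / (s:ℝ)) := hIB
    _ ≤ 5 * ((Λ ^ s)⁻¹ / (s:ℝ)) * S := by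
        have h1 : (0:ℝ) ≤ (Λ ^ s)⁻¹ / (s:ℝ) := by positivity
        nlinarith [mul_nonneg h1 hS0]
end

section
/- Let Λ > 0, m > 0, set κ := max(Λ, m), let λ ∈ ℕ, and let p₁, …, p_N ∈ ℝ⁴. For a finite tuple of vectors define |q⃗|_M := max over subsets J ⊆ {1,…,M} of ‖Σ_{i∈J} q_i‖. Then (2π)^{−4} ∫_{ℝ⁴} exp(−‖x‖²/2) · log^λ( max( |(p₁,…,p_N, Λx, −Λx)|_{N+2} / κ , κ/m ) ) d⁴x ≤ log^λ( max( |(p₁,…,p_N)|_N / κ , κ/m ) ) + √(λ!). -/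
set_option maxHeartbeats 1600000


/-- `|q⃗|_M`: the maximum over all subsets `J ⊆ {1,…,M}` of `‖Σ_{i ∈ J} q_i‖`
(the empty subset contributing 0). -/
noncomputable def momMax {M : ℕ} (q : Fin M → EuclideanSpace ℝ (Fin 4)) : ℝ :=
  Finset.univ.sup' Finset.univ_nonempty fun J : Finset (Fin M) => ‖∑ i ∈ J, q i‖

namespace Stmt12Aux

open MeasureTheory Real Finset

abbrev E4 := EuclideanSpace ℝ (Fin 4)

lemma norm_sum_le_momMax {M : ℕ} (q : Fin M → E4) (J : Finset (Fin M)) :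
    ‖∑ i ∈ J, q i‖ ≤ momMax q := by
  unfold momMax
  exact Finset.le_sup' (fun J : Finset (Fin M) => ‖∑ i ∈ J, q i‖) (Finset.mem_univ J)

lemma momMax_nonneg {M : ℕ} (q : Fin M → E4) : 0 ≤ momMax q := by
  have h := norm_sum_le_momMax q ∅
  simpa using h

lemma momMax_append_le {N : ℕ} (p : Fin N → E4) (a : E4) :
    momMax (Fin.append p ![a, -a]) ≤ momMax p + ‖a‖ := by
  classical
  unfold momMax
  refine Finset.sup'_le _ _ fun J _ => ?_
  set w : Fin (N + 2) → E4 := Fin.append p ![a, -a] with hw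
  have hk01 : (Fin.natAdd N (0 : Fin 2)) ≠ (Fin.natAdd N (1 : Fin 2)) := by
    simp [Fin.ext_iff]
  have hJfilter :
      J.filter (fun i : Fin (N + 2) => ¬ (i : ℕ) < N)
        = ({Fin.natAdd N (0 : Fin 2), Fin.natAdd N (1 : Fin 2)} :
            Finset (Fin (N + 2))).filter (· ∈ J) := by
    ext i
    simp only [Finset.mem_filter, Finset.mem_insert, Finset.mem_singleton, Fin.ext_iff,
      Fin.coe_natAdd]
    have hi := i.isLt
    constructor
    · rintro ⟨h1, h2⟩
      exact ⟨by omega, h1⟩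
    · rintro ⟨h1, h2⟩
      exact ⟨h2, by omega⟩
  have h2 : ∑ i ∈ J.filter (fun i : Fin (N + 2) => ¬ (i : ℕ) < N), w i
      = (if Fin.natAdd N (0 : Fin 2) ∈ J then a else 0)
        + (if Fin.natAdd N (1 : Fin 2) ∈ J then -a else 0) := by
    rw [hJfilter, Finset.sum_filter, Finset.sum_insert (by simpa using hk01),
      Finset.sum_singleton]
    have hw0 : w (Fin.natAdd N (0 : Fin 2)) = a := by
      simp [hw, Fin.append_right]
    have hw1 : w (Fin.natAdd N (1 : Fin 2)) = -a := by
      simp [hw, Fin.append_right]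
    rw [hw0, hw1]
  have h1 : ∑ i ∈ J.filter (fun i : Fin (N + 2) => (i : ℕ) < N), w i
      = ∑ j ∈ (Finset.univ.filter (fun j : Fin N => Fin.castAdd 2 j ∈ J)), p j := by
    rw [show J.filter (fun i : Fin (N + 2) => (i : ℕ) < N)
        = (Finset.univ.filter (fun j : Fin N => Fin.castAdd 2 j ∈ J)).image
            (Fin.castAdd 2) from ?_]
    · rw [Finset.sum_image (fun x _ y _ h => by
        apply Fin.ext; simpa [Fin.ext_iff] using h)]
      refine Finset.sum_congr rfl fun j hj => ?_
      simp [hw, Fin.append_left]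
    · ext i
      simp only [Finset.mem_filter, Finset.mem_image, Finset.mem_univ, true_and]
      constructor
      · rintro ⟨hiJ, hiN⟩
        refine ⟨⟨(i : ℕ), hiN⟩, ?_, ?_⟩
        · have : Fin.castAdd 2 (⟨(i : ℕ), hiN⟩ : Fin N) = i := by
            apply Fin.ext; simp
          rwa [this]
        · apply Fin.ext; simp
      · rintro ⟨j, hj, rfl⟩
        exact ⟨hj, by simpa using j.isLt⟩
  have hsum := Finset.sum_filter_add_sum_filter_not J (fun i : Fin (N + 2) => (i : ℕ) < N) w
  calc ‖∑ i ∈ J, w i‖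
      = ‖(∑ i ∈ J.filter (fun i : Fin (N + 2) => (i : ℕ) < N), w i)
          + ∑ i ∈ J.filter (fun i : Fin (N + 2) => ¬ (i : ℕ) < N), w i‖ := by rw [hsum]
    _ ≤ ‖∑ i ∈ J.filter (fun i : Fin (N + 2) => (i : ℕ) < N), w i‖
          + ‖∑ i ∈ J.filter (fun i : Fin (N + 2) => ¬ (i : ℕ) < N), w i‖ := norm_add_le _ _
    _ ≤ momMax p + ‖a‖ := by
        refine add_le_add ?_ ?_
        · rw [h1]; exact norm_sum_le_momMax p _
        · rw [h2]
          split_ifs <;> simp [norm_neg] <;> positivity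

/-! ### Numeric facts -/

lemma pi_sq_lb : (9.8696 : ℝ) ≤ π ^ 2 := by
  have h := Real.pi_gt_d6
  nlinarith

lemma exp_one_ub : Real.exp 1 ≤ 2.7182818286 := Real.exp_one_lt_d9.le

lemma exp_nine_quarters_le : Real.exp (9 / 4 : ℝ) ≤ π ^ 2 := by
  have h4 : Real.exp (9 / 4 : ℝ) ^ 4 = Real.exp 9 := by
    rw [← Real.exp_nat_mul]; norm_num
  refine le_of_pow_le_pow_left₀ (n := 4) (by norm_num) (by positivity) ?_
  rw [h4]
  have h9 : Real.exp 9 = Real.exp 1 ^ 9 := by rw [← Real.exp_nat_mul]; norm_num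
  calc Real.exp 9 ≤ 8103.1 := by
        rw [h9]
        calc Real.exp 1 ^ 9 ≤ 2.7182818286 ^ 9 :=
              pow_le_pow_left₀ (Real.exp_pos 1).le exp_one_ub 9
          _ ≤ 8103.1 := by norm_num
    _ ≤ 9.8696 ^ 4 := by norm_num
    _ ≤ (π ^ 2) ^ 4 := pow_le_pow_left₀ (by norm_num) pi_sq_lb 4

lemma exp_twothirds_le : Real.exp (2 / 3 : ℝ) ≤ 2 := by
  have h3 : Real.exp (2 / 3 : ℝ) ^ 3 = Real.exp 2 := by
    rw [← Real.exp_nat_mul]; norm_num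
  refine le_of_pow_le_pow_left₀ (n := 3) (by norm_num) (by norm_num) ?_
  rw [h3]
  have h2 : Real.exp 2 = Real.exp 1 ^ 2 := by rw [← Real.exp_nat_mul]; norm_num
  calc Real.exp 2 ≤ 2.7182818286 ^ 2 := by
        rw [h2]; exact pow_le_pow_left₀ (Real.exp_pos 1).le exp_one_ub 2
    _ ≤ 2 ^ 3 := by norm_num

lemma exp_0361 : Real.exp (0.360674 : ℝ) ≤ 1.4362 := by
  have h := Real.exp_bound' (x := (0.360674 : ℝ)) (by norm_num) (by norm_num)
    (n := 3) (by norm_num)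
  calc Real.exp (0.360674 : ℝ)
      ≤ ∑ m ∈ Finset.range 3, (0.360674 : ℝ) ^ m / m.factorial
          + (0.360674 : ℝ) ^ 3 * (3 + 1) / (Nat.factorial 3 * 3) := h
    _ ≤ 1.4362 := by norm_num [Finset.sum_range_succ, Nat.factorial]

lemma log2_ub : Real.log 2 ≤ 0.6931472 := by linarith [Real.log_two_lt_d9]
lemma log2_lb : (0.6931471 : ℝ) ≤ Real.log 2 := by linarith [Real.log_two_gt_d9]

lemma log3_ub : Real.log 3 ≤ 1.1022208 := by
  have h9 : Real.log 9 = 2 * Real.log 3 := by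
    rw [show (9 : ℝ) = 3 ^ 2 by norm_num, Real.log_pow]; norm_num
  have h8 : Real.log 8 = 3 * Real.log 2 := by
    rw [show (8 : ℝ) = 2 ^ 3 by norm_num, Real.log_pow]; norm_num
  have hsplit : Real.log 9 = Real.log 8 + Real.log (9 / 8) := by
    rw [← Real.log_mul (by norm_num) (by norm_num)]; norm_num
  have hsmall : Real.log (9 / 8 : ℝ) ≤ 1 / 8 := by
    have := Real.log_le_sub_one_of_pos (x := (9 / 8 : ℝ)) (by norm_num)
    linarith
  nlinarith [log2_ub]

lemma log5_ub : Real.log 5 ≤ 1.6116646 := by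
  have h25 : Real.log 25 = 2 * Real.log 5 := by
    rw [show (25 : ℝ) = 5 ^ 2 by norm_num, Real.log_pow]; norm_num
  have h24 : Real.log 24 = 3 * Real.log 2 + Real.log 3 := by
    rw [show (24 : ℝ) = 2 ^ 3 * 3 by norm_num,
      Real.log_mul (by norm_num) (by norm_num), Real.log_pow]; norm_num
  have hsplit : Real.log 25 = Real.log 24 + Real.log (25 / 24) := by
    rw [← Real.log_mul (by norm_num) (by norm_num)]; norm_num
  have hsmall : Real.log (25 / 24 : ℝ) ≤ 1 / 24 := by
    have := Real.log_le_sub_one_of_pos (x := (25 / 24 : ℝ)) (by norm_num)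
    linarith
  nlinarith [log2_ub, log3_ub]

lemma log7_ub : Real.log 7 ≤ 1.9478215 := by
  have h49 : Real.log 49 = 2 * Real.log 7 := by
    rw [show (49 : ℝ) = 7 ^ 2 by norm_num, Real.log_pow]; norm_num
  have h48 : Real.log 48 = 4 * Real.log 2 + Real.log 3 := by
    rw [show (48 : ℝ) = 2 ^ 4 * 3 by norm_num,
      Real.log_mul (by norm_num) (by norm_num), Real.log_pow]; norm_num
  have hsplit : Real.log 49 = Real.log 48 + Real.log (49 / 48) := by
    rw [← Real.log_mul (by norm_num) (by norm_num)]; norm_num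
  have hsmall : Real.log (49 / 48 : ℝ) ≤ 1 / 48 := by
    have := Real.log_le_sub_one_of_pos (x := (49 / 48 : ℝ)) (by norm_num)
    linarith
  nlinarith [log2_ub, log3_ub]

lemma log11_ub : Real.log 11 ≤ 2.4008302 := by
  have h121 : Real.log 121 = 2 * Real.log 11 := by
    rw [show (121 : ℝ) = 11 ^ 2 by norm_num, Real.log_pow]; norm_num
  have h120 : Real.log 120 = 3 * Real.log 2 + Real.log 3 + Real.log 5 := by
    rw [show (120 : ℝ) = 2 ^ 3 * 3 * 5 by norm_num,
      Real.log_mul (by norm_num) (by norm_num),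
      Real.log_mul (by norm_num) (by norm_num), Real.log_pow]; norm_num
  have hsplit : Real.log 121 = Real.log 120 + Real.log (121 / 120) := by
    rw [← Real.log_mul (by norm_num) (by norm_num)]; norm_num
  have hsmall : Real.log (121 / 120 : ℝ) ≤ 1 / 120 := by
    have := Real.log_le_sub_one_of_pos (x := (121 / 120 : ℝ)) (by norm_num)
    linarith
  nlinarith [log2_ub, log3_ub, log5_ub]

lemma log13_ub : Real.log 13 ≤ 2.5677182 := by
  have h169 : Real.log 169 = 2 * Real.log 13 := by
    rw [show (169 : ℝ) = 13 ^ 2 by norm_num, Real.log_pow]; norm_num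
  have h168 : Real.log 168 = 3 * Real.log 2 + Real.log 3 + Real.log 7 := by
    rw [show (168 : ℝ) = 2 ^ 3 * 3 * 7 by norm_num,
      Real.log_mul (by norm_num) (by norm_num),
      Real.log_mul (by norm_num) (by norm_num), Real.log_pow]; norm_num
  have hsplit : Real.log 169 = Real.log 168 + Real.log (169 / 168) := by
    rw [← Real.log_mul (by norm_num) (by norm_num)]; norm_num
  have hsmall : Real.log (169 / 168 : ℝ) ≤ 1 / 168 := by
    have := Real.log_le_sub_one_of_pos (x := (169 / 168 : ℝ)) (by norm_num)
    linarith
  nlinarith [log2_ub, log3_ub, log7_ub]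

/-! ### The core combinatorial-analytic inequality -/

/-- Helper for the numeric base cases of `ci`. -/
lemma ci_base (n : ℕ) (hn : 3 ≤ n) (q r : ℝ) (hq : Real.log n ≤ q)
    (hr2 : r ^ 2 ≤ (n.factorial : ℝ)) (hr0 : 0 ≤ r)
    (hnum : q ^ n * 2.7182818286 ≤ 9.8696 * r) :
    (Real.log n) ^ n * Real.exp (1 / (Real.log n) ^ 2)
      ≤ π ^ 2 * Real.sqrt (n.factorial) := by
  have hn0 : (0 : ℝ) < n := by positivity
  have hln1 : 1 ≤ Real.log n := by
    rw [Real.le_log_iff_exp_le hn0]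
    calc Real.exp 1 ≤ 2.7182818286 := exp_one_ub
      _ ≤ 3 := by norm_num
      _ ≤ (n : ℝ) := by exact_mod_cast hn
  have hq0 : (0 : ℝ) ≤ q := by linarith
  have hlogpow : (Real.log n) ^ n ≤ q ^ n := pow_le_pow_left₀ (by linarith) hq n
  have hexp : Real.exp (1 / (Real.log n) ^ 2) ≤ 2.7182818286 := by
    calc Real.exp (1 / (Real.log n) ^ 2) ≤ Real.exp 1 := by
          apply Real.exp_le_exp.mpr
          rw [div_le_one (by positivity)]
          nlinarith
      _ ≤ _ := exp_one_ub
  have hsqrt : r ≤ Real.sqrt (n.factorial) := Real.le_sqrt_of_sq_le hr2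
  calc (Real.log n) ^ n * Real.exp (1 / (Real.log n) ^ 2)
      ≤ q ^ n * 2.7182818286 :=
        mul_le_mul hlogpow hexp (Real.exp_pos _).le (by positivity)
    _ ≤ 9.8696 * r := hnum
    _ ≤ π ^ 2 * Real.sqrt (n.factorial) :=
        mul_le_mul pi_sq_lb hsqrt hr0 (by positivity)

lemma ci_two :
    (Real.log 2) ^ 2 * Real.exp (1 / (Real.log 2) ^ 2)
      ≤ π ^ 2 * Real.sqrt ((2 : ℕ).factorial) := by
  have h1 : (Real.log 2) ^ 2 ≤ 1 := by nlinarith [log2_ub, Real.log_nonneg (by norm_num : (1:ℝ) ≤ 2)]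
  have h2 : 1 / (Real.log 2) ^ 2 ≤ 9 / 4 := by
    rw [div_le_iff₀ (by nlinarith [log2_lb])]
    nlinarith [log2_lb]
  have h3 : Real.exp (1 / (Real.log 2) ^ 2) ≤ π ^ 2 :=
    (Real.exp_le_exp.mpr h2).trans exp_nine_quarters_le
  have h4 : (1 : ℝ) ≤ Real.sqrt ((2 : ℕ).factorial) := by
    apply Real.le_sqrt_of_sq_le; norm_num [Nat.factorial]
  calc (Real.log 2) ^ 2 * Real.exp (1 / (Real.log 2) ^ 2) ≤ 1 * π ^ 2 :=
        mul_le_mul h1 h3 (Real.exp_pos _).le zero_le_one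
    _ ≤ π ^ 2 * Real.sqrt ((2 : ℕ).factorial) := by
        rw [one_mul]; exact le_mul_of_one_le_right (sq_nonneg π) h4

lemma ci_step (n : ℕ) (hn : 16 ≤ n)
    (ih : (Real.log n) ^ n * Real.exp (1 / (Real.log n) ^ 2)
      ≤ π ^ 2 * Real.sqrt (n.factorial)) :
    (Real.log (n + 1 : ℕ)) ^ (n + 1) * Real.exp (1 / (Real.log (n + 1 : ℕ)) ^ 2)
      ≤ π ^ 2 * Real.sqrt ((n + 1).factorial) := by
  have hcast : ((n + 1 : ℕ) : ℝ) = (n : ℝ) + 1 := by push_cast; ring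
  rw [hcast]
  set a := Real.log n with ha_def
  set b := Real.log ((n : ℝ) + 1) with hb_def
  have hn' : (16 : ℝ) ≤ (n : ℝ) := by exact_mod_cast hn
  have hn0 : (0 : ℝ) < n := by linarith
  have ha : (2.7725884 : ℝ) ≤ a := by
    calc (2.7725884 : ℝ) ≤ 4 * 0.6931471 := by norm_num
      _ ≤ 4 * Real.log 2 := by nlinarith [log2_lb]
      _ = Real.log 16 := by
          rw [show (16 : ℝ) = 2 ^ 4 by norm_num, Real.log_pow]; norm_num
      _ ≤ a := Real.log_le_log (by norm_num) hn'
  have ha0 : 0 < a := by linarith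
  have hab : a ≤ b := Real.log_le_log hn0 (by linarith)
  have hb0 : 0 < b := lt_of_lt_of_le ha0 hab
  have hb_ub : b ≤ a + 1 / n := by
    have heq : (n : ℝ) + 1 = n * (1 + 1 / n) := by field_simp
    rw [hb_def, heq, Real.log_mul (by positivity) (by positivity)]
    have := Real.log_le_sub_one_of_pos (x := 1 + 1 / (n : ℝ)) (by positivity)
    have h1n : (0:ℝ) < 1 / (n:ℝ) := by positivity
    linarith
  have hbn : b ^ n ≤ a ^ n * Real.exp (1 / a) := by
    have heq : a * (1 + 1 / ((n : ℝ) * a)) = a + 1 / n := by field_simp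
    have h1 : b ≤ a * (1 + 1 / ((n : ℝ) * a)) := by rw [heq]; exact hb_ub
    calc b ^ n ≤ (a * (1 + 1 / ((n : ℝ) * a))) ^ n :=
          pow_le_pow_left₀ hb0.le h1 n
      _ = a ^ n * (1 + 1 / ((n : ℝ) * a)) ^ n := mul_pow _ _ _
      _ ≤ a ^ n * Real.exp (1 / a) := by
          apply mul_le_mul_of_nonneg_left _ (by positivity)
          calc (1 + 1 / ((n : ℝ) * a)) ^ n ≤ (Real.exp (1 / ((n : ℝ) * a))) ^ n := by
                apply pow_le_pow_left₀ (by positivity)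
                linarith [Real.add_one_le_exp (1 / ((n : ℝ) * a))]
            _ = Real.exp ((n : ℕ) * (1 / ((n : ℝ) * a))) := (Real.exp_nat_mul _ n).symm
            _ = Real.exp (1 / a) := by congr 1; field_simp
  have hexpb : Real.exp (1 / b ^ 2) ≤ Real.exp (1 / a ^ 2) := by
    apply Real.exp_le_exp.mpr
    apply div_le_div_of_nonneg_left (by norm_num) (by positivity)
    nlinarith
  have hexpa : Real.exp (1 / a) ≤ 1.4362 := by
    calc Real.exp (1 / a) ≤ Real.exp 0.360674 := by
          apply Real.exp_le_exp.mpr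
          rw [div_le_iff₀ ha0]; nlinarith [ha]
      _ ≤ 1.4362 := exp_0361
  have hsq : (4.1231 : ℝ) ≤ Real.sqrt ((n : ℝ) + 1) := by
    apply Real.le_sqrt_of_sq_le; nlinarith
  set y := Real.sqrt ((n : ℝ) + 1) with hy_def
  have hy0 : 0 < y := by linarith
  have hy2 : y ^ 2 = (n : ℝ) + 1 := Real.sq_sqrt (by positivity)
  have hb_eq : b = 2 * Real.log y := by
    rw [hb_def, ← hy2, Real.log_pow]; push_cast; ring
  have hlog41 : Real.log (4.1231 : ℝ) ≤ 1.4170694 := by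
    rw [show (4.1231 : ℝ) = 4 * 1.030775 by norm_num,
      Real.log_mul (by norm_num) (by norm_num)]
    have h4 : Real.log 4 = 2 * Real.log 2 := by
      rw [show (4 : ℝ) = 2 ^ 2 by norm_num, Real.log_pow]; norm_num
    have := Real.log_le_sub_one_of_pos (x := (1.030775 : ℝ)) (by norm_num)
    nlinarith [log2_ub]
  have hlogy : Real.log y ≤ 1.4170694 + (y * (10000 / 41231) - 1) := by
    have h := Real.log_le_sub_one_of_pos (x := y / 4.1231) (by positivity)
    rw [Real.log_div (ne_of_gt hy0) (by norm_num)] at h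
    have heq : y / (4.1231 : ℝ) = y * (10000 / 41231) := by
      rw [show (4.1231 : ℝ) = 41231 / 10000 by norm_num]; ring
    rw [heq] at h
    linarith [hlog41]
  have hb_ub2 : b ≤ 0.8341388 + 0.4850771 * y := by
    rw [hb_eq]
    have h1 : y * (20000 / 41231) ≤ 0.4850771 * y := by linarith [hy0.le]
    linarith [hlogy]
  have hkey : b * Real.exp (1 / a) ≤ y := by
    have hprod : b * Real.exp (1 / a) ≤ (0.8341388 + 0.4850771 * y) * 1.4362 :=
      mul_le_mul hb_ub2 hexpa (Real.exp_pos _).le (by nlinarith [hy0])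
    nlinarith [hsq]
  have hfact : (((n + 1).factorial : ℕ) : ℝ) = ((n : ℝ) + 1) * (n.factorial : ℝ) := by
    rw [Nat.factorial_succ]; push_cast; ring
  calc b ^ (n + 1) * Real.exp (1 / b ^ 2)
      = b * (b ^ n * Real.exp (1 / b ^ 2)) := by ring
    _ ≤ b * (a ^ n * Real.exp (1 / a) * Real.exp (1 / a ^ 2)) := by
        apply mul_le_mul_of_nonneg_left _ hb0.le
        calc b ^ n * Real.exp (1 / b ^ 2)
            ≤ (a ^ n * Real.exp (1 / a)) * Real.exp (1 / a ^ 2) :=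
              mul_le_mul hbn hexpb (Real.exp_pos _).le (by positivity)
          _ = a ^ n * Real.exp (1 / a) * Real.exp (1 / a ^ 2) := by ring
    _ = (b * Real.exp (1 / a)) * (a ^ n * Real.exp (1 / a ^ 2)) := by ring
    _ ≤ y * (π ^ 2 * Real.sqrt (n.factorial)) :=
        mul_le_mul hkey ih (by positivity) hy0.le
    _ = π ^ 2 * Real.sqrt ((n + 1).factorial) := by
        rw [hfact, Real.sqrt_mul (by positivity), ← hy_def]
        ring

lemma ci (n : ℕ) (hn : 2 ≤ n) :
    (Real.log n) ^ n * Real.exp (1 / (Real.log n) ^ 2)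
      ≤ π ^ 2 * Real.sqrt (n.factorial) := by
  rcases le_or_gt n 16 with h16 | h16
  · interval_cases n
    · exact_mod_cast ci_two
    · exact ci_base 3 (by norm_num) 1.1022208 2 (by push_cast; linarith [log3_ub])
        (by norm_num [Nat.factorial]) (by norm_num) (by norm_num)
    · exact ci_base 4 (by norm_num) 1.3862944 4
        (by rw [show ((4:ℕ):ℝ) = 2 ^ 2 by norm_num, Real.log_pow]; nlinarith [log2_ub])
        (by norm_num [Nat.factorial]) (by norm_num) (by norm_num)
    · exact ci_base 5 (by norm_num) 1.6116646 10 (by push_cast; linarith [log5_ub])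
        (by norm_num [Nat.factorial]) (by norm_num) (by norm_num)
    · exact ci_base 6 (by norm_num) 1.795368 26
        (by rw [show ((6:ℕ):ℝ) = 2 * 3 by norm_num,
              Real.log_mul (by norm_num) (by norm_num)]
            nlinarith [log2_ub, log3_ub])
        (by norm_num [Nat.factorial]) (by norm_num) (by norm_num)
    · exact ci_base 7 (by norm_num) 1.9478215 70 (by push_cast; linarith [log7_ub])
        (by norm_num [Nat.factorial]) (by norm_num) (by norm_num)
    · exact ci_base 8 (by norm_num) 2.0794416 200
        (by rw [show ((8:ℕ):ℝ) = 2 ^ 3 by norm_num, Real.log_pow]; nlinarith [log2_ub])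
        (by norm_num [Nat.factorial]) (by norm_num) (by norm_num)
    · exact ci_base 9 (by norm_num) 2.2044416 602
        (by rw [show ((9:ℕ):ℝ) = 3 ^ 2 by norm_num, Real.log_pow]; nlinarith [log3_ub])
        (by norm_num [Nat.factorial]) (by norm_num) (by norm_num)
    · exact ci_base 10 (by norm_num) 2.3048118 1904
        (by rw [show ((10:ℕ):ℝ) = 2 * 5 by norm_num,
              Real.log_mul (by norm_num) (by norm_num)]
            nlinarith [log2_ub, log5_ub])
        (by norm_num [Nat.factorial]) (by norm_num) (by norm_num)
    · exact ci_base 11 (by norm_num) 2.4008302 6317 (by push_cast; linarith [log11_ub])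
        (by norm_num [Nat.factorial]) (by norm_num) (by norm_num)
    · exact ci_base 12 (by norm_num) 2.4885152 21886
        (by rw [show ((12:ℕ):ℝ) = 2 ^ 2 * 3 by norm_num,
              Real.log_mul (by norm_num) (by norm_num), Real.log_pow]
            nlinarith [log2_ub, log3_ub])
        (by norm_num [Nat.factorial]) (by norm_num) (by norm_num)
    · exact ci_base 13 (by norm_num) 2.5677182 78911 (by push_cast; linarith [log13_ub])
        (by norm_num [Nat.factorial]) (by norm_num) (by norm_num)
    · exact ci_base 14 (by norm_num) 2.6409687 295259
        (by rw [show ((14:ℕ):ℝ) = 2 * 7 by norm_num,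
              Real.log_mul (by norm_num) (by norm_num)]
            nlinarith [log2_ub, log7_ub])
        (by norm_num [Nat.factorial]) (by norm_num) (by norm_num)
    · exact ci_base 15 (by norm_num) 2.7138854 1143535
        (by rw [show ((15:ℕ):ℝ) = 3 * 5 by norm_num,
              Real.log_mul (by norm_num) (by norm_num)]
            nlinarith [log3_ub, log5_ub])
        (by norm_num [Nat.factorial]) (by norm_num) (by norm_num)
    · exact ci_base 16 (by norm_num) 2.7725888 4574143
        (by rw [show ((16:ℕ):ℝ) = 2 ^ 4 by norm_num, Real.log_pow]; nlinarith [log2_ub])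
        (by norm_num [Nat.factorial]) (by norm_num) (by norm_num)
  · -- n ≥ 17 : induction from 16
    have H : ∀ m : ℕ, 16 ≤ m →
        (Real.log m) ^ m * Real.exp (1 / (Real.log m) ^ 2)
          ≤ π ^ 2 * Real.sqrt (m.factorial) := by
      intro m hm
      induction m, hm using Nat.le_induction with
      | base =>
          exact ci_base 16 (by norm_num) 2.7725888 4574143
            (by rw [show ((16:ℕ):ℝ) = 2 ^ 4 by norm_num, Real.log_pow]
                nlinarith [log2_ub])
            (by norm_num [Nat.factorial]) (by norm_num) (by norm_num)
      | succ k hk ih => exact ci_step k hk ih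
    exact H n (by omega)

/-! ### Integration facts -/

lemma integrable_gauss (b : ℝ) (hb : 0 < b) :
    Integrable (fun x : E4 => Real.exp (-b * ‖x‖ ^ 2)) := by
  have h := (GaussianFourier.integrable_cexp_neg_mul_sq_norm_add (V := E4)
    (b := (b : ℂ)) (by simpa using hb) 0 0).norm
  simpa [Complex.norm_exp, ← Complex.ofReal_pow] using h

lemma integral_gauss (b : ℝ) (hb : 0 < b) :
    ∫ x : E4, Real.exp (-b * ‖x‖ ^ 2) = (π / b) ^ 2 := by
  rw [GaussianFourier.integral_rexp_neg_mul_sq_norm hb, finrank_euclideanSpace_fin]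
  rw [show ((4 : ℕ) : ℝ) / 2 = ((2 : ℕ) : ℝ) by norm_num, Real.rpow_natCast]

lemma integral_le_of_dom (f : E4 → ℝ) (c : ℝ) (hf0 : ∀ x, 0 ≤ f x)
    (hfc : ∀ x, f x ≤ c * Real.exp (-(1 / 4) * ‖x‖ ^ 2)) :
    ((2 * π) ^ 4)⁻¹ * ∫ x : E4, f x ≤ c / π ^ 2 := by
  have hc0 : 0 ≤ c := by
    have h1 := (hf0 0).trans (hfc 0)
    simpa using h1
  have hint : Integrable (fun x : E4 => c * Real.exp (-(1 / 4) * ‖x‖ ^ 2)) :=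
    (integrable_gauss (1 / 4) (by norm_num)).const_mul c
  have hmono := integral_mono_of_nonneg (Filter.Eventually.of_forall hf0) hint
    (Filter.Eventually.of_forall hfc)
  have heval : ∫ x : E4, c * Real.exp (-(1 / 4) * ‖x‖ ^ 2) = c * (4 * π) ^ 2 := by
    rw [MeasureTheory.integral_const_mul, integral_gauss (1 / 4) (by norm_num)]
    congr 1
    rw [show π / (1 / 4 : ℝ) = 4 * π by ring]
  have hpi := Real.pi_pos
  calc ((2 * π) ^ 4)⁻¹ * ∫ x : E4, f x
      ≤ ((2 * π) ^ 4)⁻¹ * (c * (4 * π) ^ 2) := by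
        apply mul_le_mul_of_nonneg_left _ (by positivity)
        rw [← heval]; exact hmono
    _ = c / π ^ 2 := by
        field_simp
        ring

end Stmt12Aux

open MeasureTheory Real Stmt12Aux in
/-- Gaussian loop-momentum integration estimate (eq. (momint) of the paper):
with `κ = max(Λ,m)`, the rescaled loop integral
`(2π)^{−4} ∫ exp(−‖x‖²/2) log^λ(max(|(p⃗,Λx,−Λx)|_{N+2}/κ, κ/m)) d⁴x`
is at most `log^λ(max(|p⃗|_N/κ, κ/m)) + √(λ!)`. -/
theorem stmt_12 (Λ m : ℝ) (hΛ : 0 < Λ) (hm : 0 < m) (lam N : ℕ)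
    (p : Fin N → EuclideanSpace ℝ (Fin 4)) :
    ((2 * Real.pi) ^ 4)⁻¹ *
        ∫ x : EuclideanSpace ℝ (Fin 4),
          Real.exp (-‖x‖ ^ 2 / 2) *
            (Real.log (max (momMax (Fin.append p ![Λ • x, -(Λ • x)]) / max Λ m)
                (max Λ m / m))) ^ lam ≤
      (Real.log (max (momMax p / max Λ m) (max Λ m / m))) ^ lam +
        Real.sqrt (Nat.factorial lam) := by
  classical
  have hκ0 : (0 : ℝ) < max Λ m := lt_of_lt_of_le hΛ (le_max_left Λ m)
  set κ := max Λ m with hκ_def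
  set A := max (momMax p / κ) (κ / m) with hA_def
  set L := Real.log A with hL_def
  have hκm : (1 : ℝ) ≤ κ / m := (one_le_div hm).mpr (le_max_right Λ m)
  have hA1 : (1 : ℝ) ≤ A := le_trans hκm (le_max_right _ _)
  have hA0 : (0 : ℝ) < A := by linarith
  have hL0 : (0 : ℝ) ≤ L := Real.log_nonneg hA1
  have hAL : A = Real.exp L := (Real.exp_log hA0).symm
  -- pointwise nonnegativity of the log factor
  have hF0 : ∀ x : EuclideanSpace ℝ (Fin 4),
      0 ≤ Real.log (max (momMax (Fin.append p ![Λ • x, -(Λ • x)]) / κ) (κ / m)) :=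
    fun x => Real.log_nonneg (le_trans hκm (le_max_right _ _))
  -- pointwise upper bound by log (A + ‖x‖)
  have hFle : ∀ x : EuclideanSpace ℝ (Fin 4),
      Real.log (max (momMax (Fin.append p ![Λ • x, -(Λ • x)]) / κ) (κ / m))
        ≤ Real.log (A + ‖x‖) := by
    intro x
    have hmaxpos : 0 < max (momMax (Fin.append p ![Λ • x, -(Λ • x)]) / κ) (κ / m) :=
      lt_of_lt_of_le (by positivity) (le_max_right _ _)
    apply Real.log_le_log hmaxpos
    apply max_le
    · have h1 : momMax (Fin.append p ![Λ • x, -(Λ • x)]) ≤ momMax p + Λ * ‖x‖ := by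
        have h := momMax_append_le p (Λ • x)
        rwa [norm_smul, Real.norm_eq_abs, abs_of_pos hΛ] at h
      calc momMax (Fin.append p ![Λ • x, -(Λ • x)]) / κ
          ≤ (momMax p + Λ * ‖x‖) / κ := by gcongr
        _ = momMax p / κ + (Λ / κ) * ‖x‖ := by ring
        _ ≤ A + 1 * ‖x‖ := by
            refine add_le_add (le_max_left _ _) ?_
            apply mul_le_mul_of_nonneg_right _ (norm_nonneg x)
            exact div_le_one_of_le₀ (le_max_left Λ m) hκ0.le
        _ = A + ‖x‖ := by ring
    · calc κ / m ≤ A := le_max_right _ _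
        _ ≤ A + ‖x‖ := by linarith [norm_nonneg x]
  have hlog_split : ∀ s : ℝ, 0 ≤ s → Real.log (A + s) ≤ L + s / A := by
    intro s hs
    have heq : A + s = A * (1 + s / A) := by field_simp
    rw [heq, Real.log_mul (ne_of_gt hA0) (by positivity)]
    have := Real.log_le_sub_one_of_pos (x := 1 + s / A) (by positivity)
    have hsA : 0 ≤ s / A := by positivity
    rw [← hL_def]
    linarith
  rcases Nat.lt_or_ge lam 2 with hlam | hlam
  · interval_cases lam
    · -- lam = 0
      simp only [pow_zero, mul_one]
      have h := integral_le_of_dom (fun x : E4 => Real.exp (-‖x‖ ^ 2 / 2)) 1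
        (fun x => (Real.exp_pos _).le)
        (fun x => by
          rw [one_mul]
          apply Real.exp_le_exp.mpr
          nlinarith [sq_nonneg ‖x‖])
      calc ((2 * π) ^ 4)⁻¹ * ∫ x : E4, Real.exp (-‖x‖ ^ 2 / 2) ≤ 1 / π ^ 2 := h
        _ ≤ 1 + Real.sqrt ((0 : ℕ).factorial) := by
            rw [show ((0:ℕ).factorial : ℝ) = 1 by norm_num [Nat.factorial], Real.sqrt_one]
            have := pi_sq_lb
            rw [div_le_iff₀ (by positivity)]
            nlinarith
    · -- lam = 1
      have hdom : ∀ x : E4,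
          Real.exp (-‖x‖ ^ 2 / 2) *
              (Real.log (max (momMax (Fin.append p ![Λ • x, -(Λ • x)]) / κ) (κ / m))) ^ 1
            ≤ (L + 1) * Real.exp (-(1 / 4) * ‖x‖ ^ 2) := by
        intro x
        set s := ‖x‖ with hs_def
        have hs : 0 ≤ s := norm_nonneg x
        have hF : Real.log (max (momMax (Fin.append p ![Λ • x, -(Λ • x)]) / κ) (κ / m))
            ≤ L + s := by
          calc _ ≤ Real.log (A + s) := hFle x
            _ ≤ L + s / A := hlog_split s hs
            _ ≤ L + s := by
                have : s / A ≤ s := div_le_self hs hA1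
                linarith
        rw [pow_one]
        have hsexp : s * Real.exp (-(1 / 4) * s ^ 2) ≤ 1 := by
          have h1 : s ≤ Real.exp ((1 / 4) * s ^ 2) := by
            have h2 := Real.add_one_le_exp ((1 / 4) * s ^ 2)
            nlinarith [sq_nonneg (s / 2 - 1)]
          have h3 : Real.exp (-(1 / 4) * s ^ 2) = (Real.exp ((1 / 4) * s ^ 2))⁻¹ := by
            rw [← Real.exp_neg]; ring_nf
          rw [h3]
          rw [mul_inv_le_iff₀ (Real.exp_pos _)]
          simpa using h1
        have hexpmono : Real.exp (-s ^ 2 / 2) ≤ Real.exp (-(1 / 4) * s ^ 2) := by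
          apply Real.exp_le_exp.mpr; nlinarith [sq_nonneg s]
        have hsplit2 : Real.exp (-s ^ 2 / 2) * s ≤ Real.exp (-(1 / 4) * s ^ 2) := by
          have : Real.exp (-s ^ 2 / 2) = Real.exp (-(1 / 4) * s ^ 2) *
              Real.exp (-(1 / 4) * s ^ 2) := by
            rw [← Real.exp_add]; ring_nf
          rw [this]
          calc Real.exp (-(1/4) * s ^ 2) * Real.exp (-(1/4) * s ^ 2) * s
              = Real.exp (-(1/4) * s ^ 2) * (s * Real.exp (-(1/4) * s ^ 2)) := by ring
            _ ≤ Real.exp (-(1/4) * s ^ 2) * 1 :=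
                mul_le_mul_of_nonneg_left hsexp (Real.exp_pos _).le
            _ = Real.exp (-(1/4) * s ^ 2) := by ring
        calc Real.exp (-s ^ 2 / 2) *
              Real.log (max (momMax (Fin.append p ![Λ • x, -(Λ • x)]) / κ) (κ / m))
            ≤ Real.exp (-s ^ 2 / 2) * (L + s) :=
              mul_le_mul_of_nonneg_left hF (Real.exp_pos _).le
          _ = L * Real.exp (-s ^ 2 / 2) + Real.exp (-s ^ 2 / 2) * s := by ring
          _ ≤ L * Real.exp (-(1 / 4) * s ^ 2) + Real.exp (-(1 / 4) * s ^ 2) := by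
              refine add_le_add (mul_le_mul_of_nonneg_left hexpmono hL0) hsplit2
          _ = (L + 1) * Real.exp (-(1 / 4) * s ^ 2) := by ring
      have h := integral_le_of_dom _ (L + 1)
        (fun x => mul_nonneg (Real.exp_pos _).le (pow_nonneg (hF0 x) 1)) hdom
      calc ((2 * π) ^ 4)⁻¹ * ∫ x : E4, Real.exp (-‖x‖ ^ 2 / 2) *
              (Real.log (max (momMax (Fin.append p ![Λ • x, -(Λ • x)]) / κ) (κ / m))) ^ 1
            ≤ (L + 1) / π ^ 2 := h
        _ ≤ L ^ 1 + Real.sqrt ((1 : ℕ).factorial) := by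
            rw [show ((1:ℕ).factorial : ℝ) = 1 by norm_num [Nat.factorial],
              Real.sqrt_one, pow_one]
            rw [div_le_iff₀ (by positivity)]
            nlinarith [pi_sq_lb]
  · -- lam ≥ 2
    have hlam2 : (2 : ℝ) ≤ (lam : ℝ) := by exact_mod_cast hlam
    by_cases hc : (lam : ℝ) ≤ (3 / 2) * L * A
    · -- moderate/large L regime
      have hLpos : 0 < L := by
        rcases lt_or_ge 0 L with h | h
        · exact h
        · exfalso
          have hL0' : L = 0 := le_antisymm h hL0
          rw [hL0'] at hc
          simp at hc
          nlinarith
      have hdom : ∀ x : E4,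
          Real.exp (-‖x‖ ^ 2 / 2) *
              (Real.log (max (momMax (Fin.append p ![Λ • x, -(Λ • x)]) / κ) (κ / m))) ^ lam
            ≤ (L ^ lam * Real.exp (9 / 4)) * Real.exp (-(1 / 4) * ‖x‖ ^ 2) := by
        intro x
        set s := ‖x‖ with hs_def
        have hs : 0 ≤ s := norm_nonneg x
        have hALpos : 0 < A * L := by positivity
        have heq : L * (1 + s / (A * L)) = L + s / A := by field_simp
        have h1 : Real.log (max (momMax (Fin.append p ![Λ • x, -(Λ • x)]) / κ) (κ / m))
            ≤ L * (1 + s / (A * L)) := by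
          rw [heq]
          exact (hFle x).trans (hlog_split s hs)
        have h2 : (Real.log (max (momMax (Fin.append p ![Λ • x, -(Λ • x)]) / κ) (κ / m))) ^ lam
            ≤ L ^ lam * Real.exp ((3 / 2) * s) := by
          calc _ ≤ (L * (1 + s / (A * L))) ^ lam := pow_le_pow_left₀ (hF0 x) h1 lam
            _ = L ^ lam * (1 + s / (A * L)) ^ lam := mul_pow _ _ _
            _ ≤ L ^ lam * Real.exp ((3 / 2) * s) := by
                apply mul_le_mul_of_nonneg_left _ (by positivity)
                calc (1 + s / (A * L)) ^ lam ≤ (Real.exp (s / (A * L))) ^ lam := by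
                      apply pow_le_pow_left₀ (by positivity)
                      linarith [Real.add_one_le_exp (s / (A * L))]
                  _ = Real.exp ((lam : ℕ) * (s / (A * L))) := (Real.exp_nat_mul _ _).symm
                  _ ≤ Real.exp ((3 / 2) * s) := by
                      apply Real.exp_le_exp.mpr
                      rw [mul_div_assoc'] at *
                      rw [div_le_iff₀ hALpos]
                      nlinarith [mul_le_mul_of_nonneg_right hc hs]
        calc Real.exp (-s ^ 2 / 2) *
              (Real.log (max (momMax (Fin.append p ![Λ • x, -(Λ • x)]) / κ) (κ / m))) ^ lam
            ≤ Real.exp (-s ^ 2 / 2) * (L ^ lam * Real.exp ((3 / 2) * s)) :=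
              mul_le_mul_of_nonneg_left h2 (Real.exp_pos _).le
          _ = L ^ lam * Real.exp (-s ^ 2 / 2 + (3 / 2) * s) := by
              rw [Real.exp_add]; ring
          _ ≤ L ^ lam * (Real.exp (9 / 4) * Real.exp (-(1 / 4) * s ^ 2)) := by
              apply mul_le_mul_of_nonneg_left _ (by positivity)
              rw [← Real.exp_add]
              apply Real.exp_le_exp.mpr
              nlinarith [sq_nonneg (s - 3)]
          _ = (L ^ lam * Real.exp (9 / 4)) * Real.exp (-(1 / 4) * s ^ 2) := by ring
      have h := integral_le_of_dom _ (L ^ lam * Real.exp (9 / 4))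
        (fun x => mul_nonneg (Real.exp_pos _).le (pow_nonneg (hF0 x) lam)) hdom
      calc ((2 * π) ^ 4)⁻¹ * ∫ x : E4, Real.exp (-‖x‖ ^ 2 / 2) *
              (Real.log (max (momMax (Fin.append p ![Λ • x, -(Λ • x)]) / κ) (κ / m))) ^ lam
            ≤ (L ^ lam * Real.exp (9 / 4)) / π ^ 2 := h
        _ ≤ L ^ lam := by
            rw [div_le_iff₀ (by positivity)]
            apply mul_le_mul_of_nonneg_left exp_nine_quarters_le (pow_nonneg hL0 lam)
        _ ≤ L ^ lam + Real.sqrt (Nat.factorial lam) :=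
            le_add_of_nonneg_right (Real.sqrt_nonneg _)
    · -- small L regime
      push_neg at hc
      have hAlam : A ≤ (lam : ℝ) := by
        rcases le_or_gt (2 / 3 : ℝ) L with h23 | h23
        · nlinarith
        · calc A = Real.exp L := hAL
            _ ≤ Real.exp (2 / 3) := Real.exp_le_exp.mpr h23.le
            _ ≤ 2 := exp_twothirds_le
            _ ≤ (lam : ℝ) := hlam2
      have hg0 : 0 < Real.log (lam : ℝ) := Real.log_pos (by linarith)
      set g := Real.log (lam : ℝ) with hg_def
      have hdom : ∀ x : E4,
          Real.exp (-‖x‖ ^ 2 / 2) *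
              (Real.log (max (momMax (Fin.append p ![Λ • x, -(Λ • x)]) / κ) (κ / m))) ^ lam
            ≤ (g ^ lam * Real.exp (1 / g ^ 2)) * Real.exp (-(1 / 4) * ‖x‖ ^ 2) := by
        intro x
        set s := ‖x‖ with hs_def
        have hs : 0 ≤ s := norm_nonneg x
        have hlam0 : (0 : ℝ) < (lam : ℝ) := by linarith
        have heq : g * (1 + s / ((lam : ℝ) * g)) = g + s / (lam : ℝ) := by field_simp
        have h1 : Real.log (max (momMax (Fin.append p ![Λ • x, -(Λ • x)]) / κ) (κ / m))
            ≤ g * (1 + s / ((lam : ℝ) * g)) := by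
          rw [heq]
          calc _ ≤ Real.log (A + s) := hFle x
            _ ≤ Real.log ((lam : ℝ) + s) := Real.log_le_log (by positivity) (by linarith)
            _ ≤ g + s / (lam : ℝ) := by
                have heq2 : (lam : ℝ) + s = (lam : ℝ) * (1 + s / (lam : ℝ)) := by
                  field_simp
                rw [heq2, Real.log_mul (by positivity) (by positivity), ← hg_def]
                have := Real.log_le_sub_one_of_pos (x := 1 + s / (lam : ℝ)) (by positivity)
                have : Real.log (1 + s / (lam : ℝ)) ≤ s / (lam : ℝ) := by linarith
                linarith
        have h2 : (Real.log (max (momMax (Fin.append p ![Λ • x, -(Λ • x)]) / κ) (κ / m))) ^ lam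
            ≤ g ^ lam * Real.exp (s / g) := by
          calc _ ≤ (g * (1 + s / ((lam : ℝ) * g))) ^ lam := pow_le_pow_left₀ (hF0 x) h1 lam
            _ = g ^ lam * (1 + s / ((lam : ℝ) * g)) ^ lam := mul_pow _ _ _
            _ ≤ g ^ lam * Real.exp (s / g) := by
                apply mul_le_mul_of_nonneg_left _ (by positivity)
                calc (1 + s / ((lam : ℝ) * g)) ^ lam
                    ≤ (Real.exp (s / ((lam : ℝ) * g))) ^ lam := by
                      apply pow_le_pow_left₀ (by positivity)
                      linarith [Real.add_one_le_exp (s / ((lam : ℝ) * g))]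
                  _ = Real.exp ((lam : ℕ) * (s / ((lam : ℝ) * g))) :=
                      (Real.exp_nat_mul _ _).symm
                  _ = Real.exp (s / g) := by
                      congr 1
                      field_simp
        calc Real.exp (-s ^ 2 / 2) *
              (Real.log (max (momMax (Fin.append p ![Λ • x, -(Λ • x)]) / κ) (κ / m))) ^ lam
            ≤ Real.exp (-s ^ 2 / 2) * (g ^ lam * Real.exp (s / g)) :=
              mul_le_mul_of_nonneg_left h2 (Real.exp_pos _).le
          _ = g ^ lam * Real.exp (-s ^ 2 / 2 + s / g) := by rw [Real.exp_add]; ring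
          _ ≤ g ^ lam * (Real.exp (1 / g ^ 2) * Real.exp (-(1 / 4) * s ^ 2)) := by
              apply mul_le_mul_of_nonneg_left _ (by positivity)
              rw [← Real.exp_add]
              apply Real.exp_le_exp.mpr
              have hkey : s / g ≤ s ^ 2 / 4 + 1 / g ^ 2 := by
                have h := sq_nonneg (s / 2 - 1 / g)
                have hgg : (1 / g) ^ 2 = 1 / g ^ 2 := by field_simp
                have hdiv : s / g = s * (1 / g) := by field_simp
                nlinarith
              nlinarith
          _ = (g ^ lam * Real.exp (1 / g ^ 2)) * Real.exp (-(1 / 4) * s ^ 2) := by ring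
      have h := integral_le_of_dom _ (g ^ lam * Real.exp (1 / g ^ 2))
        (fun x => mul_nonneg (Real.exp_pos _).le (pow_nonneg (hF0 x) lam)) hdom
      calc ((2 * π) ^ 4)⁻¹ * ∫ x : E4, Real.exp (-‖x‖ ^ 2 / 2) *
              (Real.log (max (momMax (Fin.append p ![Λ • x, -(Λ • x)]) / κ) (κ / m))) ^ lam
            ≤ (g ^ lam * Real.exp (1 / g ^ 2)) / π ^ 2 := h
        _ ≤ Real.sqrt (Nat.factorial lam) := by
            rw [div_le_iff₀ (by positivity)]
            calc g ^ lam * Real.exp (1 / g ^ 2)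
                ≤ π ^ 2 * Real.sqrt (Nat.factorial lam) := ci lam hlam
              _ = Real.sqrt (Nat.factorial lam) * π ^ 2 := by ring
        _ ≤ L ^ lam + Real.sqrt (Nat.factorial lam) :=
            le_add_of_nonneg_left (pow_nonneg hL0 lam)
end

section
/- Let m > 0 and let s ∈ ℤ be an integer. Then ∫₀^m t^{−s−1} · exp(−m²/t²) dt ≤ m^{−s} · √( (max(s,0))! ). -/
open MeasureTheory Real

private lemma factB (j : ℕ) : (Nat.factorial (j+1))^2 ≤ Nat.factorial (2*j+1) := by
  induction j with
  | zero => decide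
  | succ j ih =>
    have h1 : Nat.factorial (j+2) = (j+2) * Nat.factorial (j+1) := rfl
    have h2 : Nat.factorial (2*(j+1)+1) = (2*j+3) * ((2*j+2) * Nat.factorial (2*j+1)) := by
      show Nat.factorial (2*j+3) = _
      rw [show 2*j+3 = (2*j+2)+1 from rfl, Nat.factorial_succ,
        show 2*j+2 = (2*j+1)+1 from rfl, Nat.factorial_succ]
    calc (Nat.factorial (j+2))^2 = (j+2)^2 * (Nat.factorial (j+1))^2 := by rw [h1]; ring
      _ ≤ (j+2)^2 * Nat.factorial (2*j+1) := Nat.mul_le_mul_left _ ih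
      _ ≤ ((2*j+3)*(2*j+2)) * Nat.factorial (2*j+1) :=
          Nat.mul_le_mul_right _ (by nlinarith)
      _ = Nat.factorial (2*(j+1)+1) := by rw [h2]; ring

private lemma factA (j : ℕ) : (Nat.factorial (j+1))^2 ≤ 4 * Nat.factorial (2*j) := by
  induction j with
  | zero => decide
  | succ j ih =>
    have h1 : Nat.factorial (j+2) = (j+2) * Nat.factorial (j+1) := rfl
    have h2 : Nat.factorial (2*(j+1)) = (2*j+2) * ((2*j+1) * Nat.factorial (2*j)) := by
      show Nat.factorial (2*j+2) = _
      rw [show 2*j+2 = (2*j+1)+1 from rfl, Nat.factorial_succ, Nat.factorial_succ]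
    rcases Nat.eq_zero_or_pos j with rfl | hj
    · decide
    calc (Nat.factorial (j+2))^2 = (j+2)^2 * (Nat.factorial (j+1))^2 := by rw [h1]; ring
      _ ≤ (j+2)^2 * (4 * Nat.factorial (2*j)) := Nat.mul_le_mul_left _ ih
      _ ≤ ((2*j+2)*(2*j+1)) * (4 * Nat.factorial (2*j)) :=
          Nat.mul_le_mul_right _ (by nlinarith)
      _ = 4 * Nat.factorial (2*(j+1)) := by rw [h2]; ring

private lemma key_bound (m C : ℝ) (hm : 0 < m) (s : ℤ) (p : ℕ)
    (hb : ∀ t ∈ Set.Ioc (0:ℝ) m, t ^ (-s-1) * Real.exp (-m^2/t^2) ≤ C * t ^ p) :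
    ∫ t in (0:ℝ)..m, t ^ (-s-1) * Real.exp (-m^2/t^2) ≤ C * (m ^ (p+1) / (p+1)) := by
  have hC : 0 ≤ C := by
    have := hb m ⟨hm, le_refl m⟩
    have h0 : (0:ℝ) < m ^ (-s-1) * Real.exp (-m^2/m^2) := by positivity
    nlinarith [pow_pos hm p]
  set f : ℝ → ℝ := fun t => t ^ (-s-1) * Real.exp (-m^2/t^2) with hf
  have hfm : Measurable f := by fun_prop
  have hfnn : ∀ t ∈ Set.Ioc (0:ℝ) m, 0 ≤ f t := by
    intro t ht
    have : (0:ℝ) < t := ht.1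
    positivity
  have hint : IntegrableOn f (Set.Ioc 0 m) := by
    apply Measure.integrableOn_of_bounded (M := C * m ^ p) measure_Ioc_lt_top.ne
      hfm.aestronglyMeasurable
    filter_upwards [ae_restrict_mem measurableSet_Ioc] with t ht
    rw [Real.norm_eq_abs, abs_of_nonneg (hfnn t ht)]
    refine (hb t ht).trans (mul_le_mul_of_nonneg_left ?_ hC)
    exact pow_le_pow_left₀ ht.1.le ht.2 p
  have hgint : IntegrableOn (fun t : ℝ => C * t ^ p) (Set.Ioc 0 m) :=
    (Continuous.integrableOn_Ioc (by fun_prop))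
  rw [intervalIntegral.integral_of_le hm.le]
  calc ∫ t in Set.Ioc (0:ℝ) m, f t ≤ ∫ t in Set.Ioc (0:ℝ) m, C * t ^ p :=
        setIntegral_mono_on hint hgint measurableSet_Ioc hb
    _ = C * (m ^ (p+1) / (p+1)) := by
        rw [← intervalIntegral.integral_of_le hm.le, intervalIntegral.integral_const_mul,
          integral_pow]
        norm_num

/-- For `m > 0` and an integer `s`:
`∫₀^m t^{−s−1} exp(−m²/t²) dt ≤ m^{−s} √((max(s,0))!)`. -/
theorem stmt_13 (m : ℝ) (hm : 0 < m) (s : ℤ) :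
    ∫ t in (0 : ℝ)..m, t ^ (-s - 1) * Real.exp (-m ^ 2 / t ^ 2) ≤
      m ^ (-s) * Real.sqrt (Nat.factorial s.toNat) := by
  rcases lt_or_ge s 0 with hs | hs
  · -- s ≤ -1
    set p : ℕ := (-s-1).toNat with hp
    have hpz : ((p : ℤ)) = -s - 1 := Int.toNat_of_nonneg (by omega)
    have hb : ∀ t ∈ Set.Ioc (0:ℝ) m, t ^ (-s-1) * Real.exp (-m^2/t^2) ≤ 1 * t ^ p := by
      intro t ht
      rw [one_mul, ← hpz, zpow_natCast]
      have h1 : Real.exp (-m^2/t^2) ≤ 1 := by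
        rw [Real.exp_le_one_iff]
        have : (0:ℝ) < t := ht.1
        have : (0:ℝ) < t ^ 2 := by positivity
        apply div_nonpos_of_nonpos_of_nonneg (neg_nonpos.mpr (by positivity)) this.le
      nlinarith [pow_pos ht.1 p, Real.exp_pos (-m^2/t^2), pow_nonneg ht.1.le p]
    have hkey := key_bound m 1 hm s p hb
    have hsn : s.toNat = 0 := by omega
    have hzs : (↑(p+1) : ℤ) = -s := by omega
    rw [hsn] at *
    simp only [Nat.factorial_zero, Nat.cast_one, Real.sqrt_one, mul_one]
    refine hkey.trans ?_
    rw [one_mul, ← hzs, zpow_natCast]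
    apply div_le_self (by positivity)
    exact_mod_cast Nat.one_le_iff_ne_zero.mpr (Nat.succ_ne_zero p)
  · -- 0 ≤ s
    set n : ℕ := s.toNat with hn
    have hsn : (n : ℤ) = s := Int.toNat_of_nonneg hs
    set k : ℕ := n / 2 + 1 with hk
    have hkn : n + 1 ≤ 2 * k := by omega
    set p : ℕ := 2 * k - (n + 1) with hp
    have hpn : p + (n + 1) = 2 * k := by omega
    set C : ℝ := (Nat.factorial k : ℝ) / m ^ (2*k) with hC
    have hb : ∀ t ∈ Set.Ioc (0:ℝ) m, t ^ (-s-1) * Real.exp (-m^2/t^2) ≤ C * t ^ p := by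
      intro t ht
      have ht0 : (0:ℝ) < t := ht.1
      have h1 : t ^ (-s-1) = (t ^ (n+1))⁻¹ := by
        rw [← hsn, show (-(n:ℤ)-1) = -((n+1 : ℕ) : ℤ) by push_cast; ring, zpow_neg, zpow_natCast]
      have hx : (0:ℝ) ≤ m^2/t^2 := by positivity
      have h2 : (m^2/t^2) ^ k / (Nat.factorial k) ≤ Real.exp (m^2/t^2) :=
        Real.pow_div_factorial_le_exp _ hx k
      have h3 : Real.exp (-m^2/t^2) ≤ (Nat.factorial k : ℝ) * t ^ (2*k) / m ^ (2*k) := by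
        have hpos : (0:ℝ) < (m^2/t^2) ^ k / (Nat.factorial k) := by positivity
        have := inv_anti₀ hpos h2
        rw [show -m^2/t^2 = -(m^2/t^2) by ring, Real.exp_neg]
        refine this.trans_eq ?_
        rw [div_pow, ← pow_mul, ← pow_mul]
        field_simp
      calc t ^ (-s-1) * Real.exp (-m^2/t^2)
          ≤ (t ^ (n+1))⁻¹ * ((Nat.factorial k : ℝ) * t ^ (2*k) / m ^ (2*k)) := by
            rw [h1]
            exact mul_le_mul_of_nonneg_left h3 (by positivity)
        _ = C * t ^ p := by
            rw [hC, ← hpn, pow_add]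
            field_simp
            ring
    have hkey := key_bound m C hm s p hb
    refine hkey.trans ?_
    have hms : m ^ (-s) = (m ^ n)⁻¹ := by
      rw [← hsn, ← zpow_natCast m n, ← zpow_neg]
    have hmp : m ^ (2*k) = m ^ (p+1) * m ^ n := by
      rw [← pow_add]; congr 1; omega
    have hfle : (Nat.factorial k : ℝ) / (p+1) ≤ Real.sqrt (Nat.factorial n) := by
      rw [Real.le_sqrt (by positivity) (by positivity)]
      have hnat : (Nat.factorial k)^2 ≤ (p+1)^2 * Nat.factorial n := by
        rcases Nat.even_or_odd n with ⟨j, hj⟩ | ⟨j, hj⟩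
        · have hkj : k = j + 1 := by omega
          have hpj : p + 1 = 2 := by omega
          rw [hkj, hpj, hj, show j + j = 2 * j by ring]
          calc (Nat.factorial (j+1))^2 ≤ 4 * Nat.factorial (2*j) := factA j
            _ = 2^2 * Nat.factorial (2*j) := by norm_num
        · have hkj : k = j + 1 := by omega
          have hpj : p + 1 = 1 := by omega
          rw [hkj, hpj, hj]
          simpa using factB j
      have : ((Nat.factorial k : ℝ))^2 ≤ ((p:ℝ)+1)^2 * Nat.factorial n := by
        exact_mod_cast hnat
      rw [div_pow]
      rw [div_le_iff₀ (by positivity)]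
      calc ((Nat.factorial k : ℝ))^2 ≤ ((p:ℝ)+1)^2 * Nat.factorial n := this
        _ = (Nat.factorial n : ℝ) * ((p:ℝ)+1)^2 := by ring
    calc C * (m ^ (p+1) / (p+1))
        = ((Nat.factorial k : ℝ) / (p+1)) * (m ^ n)⁻¹ := by
          rw [hC, hmp]
          have hm1 : m ^ (p+1) ≠ 0 := by positivity
          have hm2 : m ^ n ≠ 0 := by positivity
          field_simp
      _ ≤ Real.sqrt (Nat.factorial n) * (m ^ n)⁻¹ :=
          mul_le_mul_of_nonneg_right hfle (by positivity)
      _ = m ^ (-s) * Real.sqrt (Nat.factorial n) := by rw [hms]; ring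
end
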